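/- arXiv:1506.06469 — 4 statements merged into one kernel-verified Lean document; each statement's English description precedes it below -/
import Mathlib

section
/- Let n ≥ 2 and let α ∈ ℝⁿ be non-resonant (k·α ≠ 0 for every nonzero k ∈ ℤⁿ) with at least one component equal to 1. Set Ψ_α(Q) = max{ |k·α|⁻¹ : k ∈ ℤⁿ, 0 < |k|_∞ ≤ Q } for Q ≥ 1, and C_n = n²·n!. Then for every real δ with 0 < δ ≤ n²/(n+2) and every point θ ∈ ℝⁿ, there exists a real number t with 0 ≤ t ≤ C_n·Ψ_α(2·C_n/δ) and an integer vector k ∈ ℤⁿ such that |t·α − θ − k|_∞ ≤ δ. -/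
open Module Submodule

section Gauge
variable {n : ℕ} (α : Fin n → ℝ) (δ T : ℝ)

noncomputable def NG (x : Fin n → ℝ) : ℝ :=
  sInf {r : ℝ | ∃ s : ℝ, r = max (δ⁻¹ * ‖x - s • α‖) (T⁻¹ * |s|)}

variable (hδ : 0 < δ) (hT : 0 < T)

lemma NG_set_nonempty (x : Fin n → ℝ) :
    {r : ℝ | ∃ s : ℝ, r = max (δ⁻¹ * ‖x - s • α‖) (T⁻¹ * |s|)}.Nonempty :=
  ⟨_, ⟨0, rfl⟩⟩

include hδ hT

lemma NG_set_bdd (x : Fin n → ℝ) :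
    ∀ r ∈ {r : ℝ | ∃ s : ℝ, r = max (δ⁻¹ * ‖x - s • α‖) (T⁻¹ * |s|)}, (0:ℝ) ≤ r := by
  rintro r ⟨s, rfl⟩
  have h1 : (0:ℝ) ≤ δ⁻¹ * ‖x - s • α‖ :=
    mul_nonneg (inv_nonneg.2 hδ.le) (norm_nonneg _)
  exact le_trans h1 (le_max_left _ _)

lemma NG_le (x : Fin n → ℝ) (s : ℝ) :
    NG α δ T x ≤ max (δ⁻¹ * ‖x - s • α‖) (T⁻¹ * |s|) := by
  apply csInf_le ⟨0, fun r hr => NG_set_bdd α δ T hδ hT x r hr⟩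
  exact ⟨s, rfl⟩

lemma le_NG (x : Fin n → ℝ) (b : ℝ)
    (h : ∀ s : ℝ, b ≤ max (δ⁻¹ * ‖x - s • α‖) (T⁻¹ * |s|)) : b ≤ NG α δ T x := by
  apply le_csInf (NG_set_nonempty α δ T x)
  rintro r ⟨s, rfl⟩; exact h s

lemma NG_nonneg (x : Fin n → ℝ) : 0 ≤ NG α δ T x :=
  le_csInf (NG_set_nonempty α δ T x) (NG_set_bdd α δ T hδ hT x)

lemma NG_zero : NG α δ T 0 = 0 := by
  have h := NG_le α δ T hδ hT 0 0
  simp at h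
  exact le_antisymm h (NG_nonneg α δ T hδ hT 0)

lemma NG_add (x y : Fin n → ℝ) : NG α δ T (x + y) ≤ NG α δ T x + NG α δ T y := by
  apply le_of_forall_pos_le_add
  intro ε hε
  obtain ⟨r₁, ⟨s₁, rfl⟩, hr₁⟩ := exists_lt_of_csInf_lt (NG_set_nonempty α δ T x)
    (show NG α δ T x < NG α δ T x + ε/2 by linarith)
  obtain ⟨r₂, ⟨s₂, rfl⟩, hr₂⟩ := exists_lt_of_csInf_lt (NG_set_nonempty α δ T y)
    (show NG α δ T y < NG α δ T y + ε/2 by linarith)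
  have hle := NG_le α δ T hδ hT (x + y) (s₁ + s₂)
  have key : max (δ⁻¹ * ‖x + y - (s₁ + s₂) • α‖) (T⁻¹ * |s₁ + s₂|) ≤
      max (δ⁻¹ * ‖x - s₁ • α‖) (T⁻¹ * |s₁|) + max (δ⁻¹ * ‖y - s₂ • α‖) (T⁻¹ * |s₂|) := by
    apply max_le
    · have : ‖x + y - (s₁ + s₂) • α‖ ≤ ‖x - s₁ • α‖ + ‖y - s₂ • α‖ := by
        have : x + y - (s₁ + s₂) • α = (x - s₁ • α) + (y - s₂ • α) := by
          rw [add_smul]; abel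
        rw [this]; exact norm_add_le _ _
      calc δ⁻¹ * ‖x + y - (s₁ + s₂) • α‖ ≤ δ⁻¹ * (‖x - s₁ • α‖ + ‖y - s₂ • α‖) := by
            apply mul_le_mul_of_nonneg_left this (inv_nonneg.2 hδ.le)
        _ = δ⁻¹ * ‖x - s₁ • α‖ + δ⁻¹ * ‖y - s₂ • α‖ := by ring
        _ ≤ _ := add_le_add (le_max_left _ _) (le_max_left _ _)
    · calc T⁻¹ * |s₁ + s₂| ≤ T⁻¹ * (|s₁| + |s₂|) := by
            apply mul_le_mul_of_nonneg_left (abs_add_le _ _) (inv_nonneg.2 hT.le)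
        _ = T⁻¹ * |s₁| + T⁻¹ * |s₂| := by ring
        _ ≤ _ := add_le_add (le_max_right _ _) (le_max_right _ _)
  linarith [le_trans hle key]

lemma NG_smul (c : ℝ) (x : Fin n → ℝ) : NG α δ T (c • x) = |c| * NG α δ T x := by
  rcases eq_or_ne c 0 with rfl | hc
  · simp [NG_zero α δ T hδ hT]
  have habs : 0 < |c| := abs_pos.2 hc
  have key : ∀ (c : ℝ), c ≠ 0 → ∀ x, NG α δ T (c • x) ≤ |c| * NG α δ T x := by
    intro c hc x
    have habs : 0 < |c| := abs_pos.2 hc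
    rw [← div_le_iff₀' habs]
    apply le_NG α δ T hδ hT x
    intro s
    rw [div_le_iff₀' habs]
    have := NG_le α δ T hδ hT (c • x) (c * s)
    refine le_trans this (le_of_eq ?_)
    have h1 : c • x - (c * s) • α = c • (x - s • α) := by
      rw [smul_sub, mul_smul]
    rw [h1, norm_smul, Real.norm_eq_abs, abs_mul, mul_max_of_nonneg _ _ (abs_nonneg c)]
    congr 1 <;> ring
  have h1 := key c hc x
  have h2 := key c⁻¹ (inv_ne_zero hc) (c • x)
  rw [inv_smul_smul₀ hc, abs_inv] at h2
  refine le_antisymm h1 ?_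
  have h3 := mul_le_mul_of_nonneg_left h2 habs.le
  rw [← mul_assoc, mul_inv_cancel₀ (ne_of_gt habs), one_mul] at h3
  exact h3

lemma NG_lb (x : Fin n → ℝ) : (δ + T * ‖α‖)⁻¹ * ‖x‖ ≤ NG α δ T x := by
  have hpos : 0 < δ + T * ‖α‖ := by positivity
  apply le_NG α δ T hδ hT x
  intro s
  have hx : ‖x‖ ≤ ‖x - s • α‖ + |s| * ‖α‖ := by
    have h0 := norm_add_le (x - s • α) (s • α)
    simp only [sub_add_cancel] at h0
    rw [norm_smul, Real.norm_eq_abs] at h0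
    exact h0
  rcases le_or_gt ((δ + T * ‖α‖)⁻¹ * ‖x‖) (δ⁻¹ * ‖x - s • α‖) with h | h
  · exact le_trans h (le_max_left _ _)
  · apply le_trans _ (le_max_right _ _)
    have h' : ‖x - s • α‖ * (δ + T * ‖α‖) < ‖x‖ * δ := by
      rw [inv_mul_eq_div, inv_mul_eq_div, div_lt_div_iff₀ hδ hpos] at h
      linarith
    rw [inv_mul_eq_div, inv_mul_eq_div, div_le_div_iff₀ hpos hT]
    rcases eq_or_lt_of_le (norm_nonneg α) with hα0 | hα0
    · exfalso
      rw [← hα0] at h' hx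
      simp only [mul_zero, zero_mul, add_zero] at h' hx
      nlinarith
    · nlinarith [mul_le_mul_of_nonneg_right hx hpos.le, h', mul_pos hT hα0]

lemma NG_pos (x : Fin n → ℝ) (hx : x ≠ 0) : 0 < NG α δ T x := by
  have h := NG_lb α δ T hδ hT x
  have : 0 < (δ + T * ‖α‖)⁻¹ * ‖x‖ := by
    have hpos : 0 < δ + T * ‖α‖ := by positivity
    have : 0 < ‖x‖ := norm_pos_iff.2 hx
    positivity
  linarith

lemma NG_extract (x : Fin n → ℝ) (h : NG α δ T x < 1) :
    ∃ s : ℝ, ‖x - s • α‖ < δ ∧ |s| < T := by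
  obtain ⟨r, ⟨s, rfl⟩, hr⟩ := exists_lt_of_csInf_lt (NG_set_nonempty α δ T x) h
  refine ⟨s, ?_, ?_⟩
  · have h1 : δ⁻¹ * ‖x - s • α‖ < 1 := lt_of_le_of_lt (le_max_left _ _) hr
    rw [inv_mul_lt_iff₀ hδ] at h1; linarith
  · have h2 : T⁻¹ * |s| < 1 := lt_of_le_of_lt (le_max_right _ _) hr
    rw [inv_mul_lt_iff₀ hT] at h2; linarith

end Gauge
noncomputable def covB (d : ℕ) : ℝ := 7/16 * ((16/7)^d - 1)

lemma covB_zero : covB 0 = 0 := by simp [covB]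

lemma covB_nonneg (d : ℕ) : 0 ≤ covB d := by
  have : (1:ℝ) ≤ (16/7)^d := one_le_pow₀ (by norm_num)
  simp only [covB]; nlinarith

lemma covB_succ (d : ℕ) : covB (d+1) = 9/16 + (16/7) * covB d := by
  simp only [covB, pow_succ]; ring

section Cover
set_option maxHeartbeats 2000000
set_option synthInstance.maxHeartbeats 400000

variable {n : ℕ}

theorem cover (N : (Fin n → ℝ) → ℝ)
    (hNadd : ∀ x y, N (x + y) ≤ N x + N y)
    (hNsmul : ∀ (c : ℝ) x, N (c • x) = |c| * N x)
    (hNpos : ∀ x, x ≠ 0 → 0 < N x)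
    (c₀ : ℝ) (hc₀ : 0 < c₀) (hNlb : ∀ x, c₀ * ‖x‖ ≤ N x) :
    ∀ (d : ℕ) (V : Submodule ℝ (Fin n → ℝ)), finrank ℝ V = d →
    ∀ (G : Submodule ℤ (Fin n → ℝ)), (G : Set (Fin n → ℝ)) ⊆ (V : Set (Fin n → ℝ)) →
    (V ≤ Submodule.span ℝ (G : Set (Fin n → ℝ))) →
    (∀ x ∈ V, x ≠ 0 → ∃ φ : (Fin n → ℝ) →ₗ[ℝ] ℝ,
        (∀ g ∈ G, ∃ z : ℤ, φ g = (z : ℝ)) ∧ φ x ≠ 0) →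
    ∀ Λ : ℝ, 0 < Λ →
    (∀ φ : (Fin n → ℝ) →ₗ[ℝ] ℝ, (∃ x ∈ V, φ x ≠ 0) →
        (∀ g ∈ G, ∃ z : ℤ, φ g = (z : ℝ)) →
        ∀ C : ℝ, (∀ x ∈ V, |φ x| ≤ C * N x) → Λ ≤ C) →
    ∀ θ ∈ V, ∃ w, w ∈ G ∧ N (θ - w) ≤ covB d / Λ := by
  have hN0 : N 0 = 0 := by
    have := hNsmul 0 0; simpa using this
  intro d
  induction d with
  | zero =>
    intro V hV G hGV hspan hsepd Λ hΛ hdual θ hθ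
    have hVbot : V = ⊥ := Submodule.finrank_eq_zero.mp hV
    refine ⟨0, zero_mem _, ?_⟩
    have : θ = 0 := by rw [hVbot] at hθ; simpa using hθ
    rw [this, covB_zero, zero_div, sub_zero, hN0]
  | succ d ih =>
    intro V hV G hGV hspan hsepd Λ hΛ hdual θ hθ
    -- the set of "dual norm bounds"
    set S : Set ℝ := {C : ℝ | ∃ φ : (Fin n → ℝ) →ₗ[ℝ] ℝ,
      (∀ g ∈ G, ∃ z : ℤ, φ g = (z : ℝ)) ∧ (∃ x ∈ V, φ x ≠ 0) ∧
      (∀ x ∈ V, |φ x| ≤ C * N x)} with hS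
    -- a nonzero element of V
    have hVnt : ∃ x ∈ V, x ≠ (0 : Fin n → ℝ) := by
      have h1 : 0 < finrank ℝ V := by rw [hV]; omega
      have h2 : Nontrivial V := finrank_pos_iff.mp h1
      obtain ⟨x, hx⟩ := exists_ne (0 : V)
      refine ⟨(x : Fin n → ℝ), x.2, fun hc => hx ?_⟩
      ext
      rw [hc]; rfl
    have hNnn : ∀ x, 0 ≤ N x := by
      intro x
      have h1 := hNlb x
      have : 0 ≤ c₀ * ‖x‖ := by positivity
      linarith
    have hSne : S.Nonempty := by
      obtain ⟨x₀, hx₀V, hx₀⟩ := hVnt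
      obtain ⟨φ, hφZ, hφx₀⟩ := hsepd x₀ hx₀V hx₀
      set Cb : ℝ := ∑ i, |φ (fun j => if i = j then (1:ℝ) else 0)| with hCb
      have hCb0 : 0 ≤ Cb := Finset.sum_nonneg fun i _ => abs_nonneg _
      refine ⟨Cb / c₀, φ, hφZ, ⟨x₀, hx₀V, hφx₀⟩, ?_⟩
      intro x _
      have hexp : φ x = ∑ i, x i * φ (fun j => if i = j then (1:ℝ) else 0) := by
        conv_lhs => rw [pi_eq_sum_univ x, map_sum]
        congr 1
        ext i
        rw [map_smul, smul_eq_mul]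
      have h1 : |φ x| ≤ ∑ i, |x i| * |φ (fun j => if i = j then (1:ℝ) else 0)| := by
        rw [hexp]
        refine le_trans (Finset.abs_sum_le_sum_abs _ _) ?_
        apply Finset.sum_le_sum
        intro i _
        rw [abs_mul]
      have h2 : ∑ i, |x i| * |φ (fun j => if i = j then (1:ℝ) else 0)| ≤ ‖x‖ * Cb := by
        rw [hCb, Finset.mul_sum]
        apply Finset.sum_le_sum
        intro i _
        apply mul_le_mul_of_nonneg_right _ (abs_nonneg _)
        have := norm_le_pi_norm x i
        simpa using this
      have h3 : c₀ * ‖x‖ ≤ N x := hNlb x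
      have h4 : ‖x‖ ≤ N x / c₀ := by
        rw [le_div_iff₀ hc₀]; linarith
      calc |φ x| ≤ ‖x‖ * Cb := le_trans h1 h2
        _ ≤ (N x / c₀) * Cb := by
            apply mul_le_mul_of_nonneg_right h4 hCb0
        _ = Cb / c₀ * N x := by ring
    have hSlb : ∀ C ∈ S, Λ ≤ C := by
      rintro C ⟨φ, hφZ, hφne, hφC⟩
      exact hdual φ hφne hφZ C hφC
    have hbdd : BddBelow S := ⟨Λ, fun C hC => hSlb C hC⟩
    set lam : ℝ := sInf S with hlam
    have hlamΛ : Λ ≤ lam := le_csInf hSne hSlb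
    have hlam0 : 0 < lam := lt_of_lt_of_le hΛ hlamΛ
    obtain ⟨C, hCS, hClt⟩ : ∃ C ∈ S, C < 9/8 * lam :=
      exists_lt_of_csInf_lt hSne (by linarith)
    obtain ⟨φ, hφZ, hφne, hφC⟩ := hCS
    have hlamC : lam ≤ C := csInf_le hbdd ⟨φ, hφZ, hφne, hφC⟩
    -- primitivity: get u ∈ G with φ u = 1
    obtain ⟨u, huG, hφu⟩ : ∃ u, u ∈ G ∧ φ u = 1 := by
      classical
      set J : AddSubgroup ℤ :=
      { carrier := {z : ℤ | ∃ g ∈ G, φ g = (z : ℝ)}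
        zero_mem' := ⟨0, G.zero_mem, by simp⟩
        add_mem' := by
          rintro z₁ z₂ ⟨g₁, hg₁, he₁⟩ ⟨g₂, hg₂, he₂⟩
          exact ⟨g₁ + g₂, G.add_mem hg₁ hg₂, by rw [map_add, he₁, he₂]; push_cast; ring⟩
        neg_mem' := by
          rintro z ⟨g, hg, he⟩
          exact ⟨-g, G.neg_mem hg, by rw [map_neg, he]; push_cast; ring⟩ } with hJdef
      have hJmem : ∀ z : ℤ, z ∈ J ↔ ∃ g ∈ G, φ g = (z : ℝ) := fun z => Iff.rfl
      obtain ⟨a, hA⟩ := Int.subgroup_cyclic J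
      have hdvd : ∀ z : ℤ, z ∈ J ↔ a ∣ z := by
        intro z
        rw [hA, AddSubgroup.mem_closure_singleton]
        constructor
        · rintro ⟨m, hm⟩; exact ⟨m, by rw [← hm]; simp [mul_comm]⟩
        · rintro ⟨m, hm⟩; exact ⟨m, by rw [hm]; simp [mul_comm]⟩
      have hane : a ≠ 0 := by
        rintro rfl
        obtain ⟨x, hxV, hφx⟩ := hφne
        have hg0 : ∀ g ∈ G, φ g = 0 := by
          intro g hg
          obtain ⟨z, hz⟩ := hφZ g hg
          have hzJ : z ∈ J := (hJmem z).mpr ⟨g, hg, hz⟩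
          rw [hdvd] at hzJ
          obtain rfl := zero_dvd_iff.mp hzJ
          simpa using hz
        have hker : V ≤ LinearMap.ker φ := by
          refine le_trans hspan ?_
          rw [Submodule.span_le]
          intro g hg
          simpa [LinearMap.mem_ker] using hg0 g hg
        exact hφx (by simpa [LinearMap.mem_ker] using hker hxV)
      by_cases ha2 : 2 ≤ |a|
      · exfalso
        set φ' : (Fin n → ℝ) →ₗ[ℝ] ℝ := ((a : ℝ))⁻¹ • φ with hφ'def
        have hacast : ((a:ℝ)) ≠ 0 := Int.cast_ne_zero.mpr hane
        have hφ'Z : ∀ g ∈ G, ∃ z : ℤ, φ' g = (z : ℝ) := by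
          intro g hg
          obtain ⟨z, hz⟩ := hφZ g hg
          have hzJ : z ∈ J := (hJmem z).mpr ⟨g, hg, hz⟩
          rw [hdvd] at hzJ
          obtain ⟨m, rfl⟩ := hzJ
          refine ⟨m, ?_⟩
          simp only [hφ'def, LinearMap.smul_apply, smul_eq_mul, hz]
          push_cast
          field_simp
        have hφ'ne : ∃ x ∈ V, φ' x ≠ 0 := by
          obtain ⟨x, hxV, hφx⟩ := hφne
          refine ⟨x, hxV, ?_⟩
          simp only [hφ'def, LinearMap.smul_apply, smul_eq_mul]
          exact mul_ne_zero (inv_ne_zero hacast) hφx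
        have hφ'C : ∀ x ∈ V, |φ' x| ≤ C / |(a:ℝ)| * N x := by
          intro x hx
          simp only [hφ'def, LinearMap.smul_apply, smul_eq_mul, abs_mul, abs_inv]
          rw [div_eq_inv_mul, mul_assoc]
          apply mul_le_mul_of_nonneg_left (hφC x hx) (inv_nonneg.2 (abs_nonneg _))
        have hmem : C / |(a:ℝ)| ∈ S := ⟨φ', hφ'Z, hφ'ne, hφ'C⟩
        have hlow : lam ≤ C / |(a:ℝ)| := csInf_le hbdd hmem
        have ha2' : (2:ℝ) ≤ |(a:ℝ)| := by
          rw [← Int.cast_abs]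
          exact_mod_cast ha2
        have hC0 : 0 < C := lt_of_lt_of_le hlam0 hlamC
        have : C / |(a:ℝ)| ≤ C / 2 := by
          apply div_le_div_of_nonneg_left hC0.le (by norm_num) ha2'
        linarith
      · have ha1 : a = 1 ∨ a = -1 := by
          rcases (abs_eq (by norm_num : (0:ℤ) ≤ 1)).mp (by have := abs_pos.2 hane; omega : |a| = 1) with h | h
          · exact Or.inl h
          · exact Or.inr (by omega)
        have haJ : a ∈ J := by
          rw [hdvd]
        obtain ⟨g, hg, hφg⟩ := (hJmem a).mp haJ
        rcases ha1 with rfl | rfl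
        · exact ⟨g, hg, by rw [hφg]; norm_num⟩
        · refine ⟨-g, G.neg_mem hg, ?_⟩
          rw [map_neg, hφg]
          norm_num
    have huV : u ∈ V := hGV huG
    -- pick v almost attaining the dual norm
    obtain ⟨v, hvV, hvN, hvφ⟩ : ∃ v ∈ V, N v ≤ 1 ∧ 8/9 * lam ≤ φ v := by
      by_contra hcon
      push_neg at hcon
      have hb : ∀ x ∈ V, |φ x| ≤ (8/9 * lam) * N x := by
        intro x hx
        rcases eq_or_ne x 0 with rfl | hx0
        · simp [hN0, abs_nonneg]
        · have hNx : 0 < N x := hNpos x hx0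
          have hN1 : N ((N x)⁻¹ • x) ≤ 1 := by
            rw [hNsmul, abs_inv, abs_of_pos hNx, inv_mul_cancel₀ (ne_of_gt hNx)]
          have hN2 : N ((N x)⁻¹ • (-x)) ≤ 1 := by
            have : (N x)⁻¹ • (-x) = (-(N x)⁻¹) • x := by
              rw [neg_smul, smul_neg]
            rw [this, hNsmul, abs_neg, abs_inv, abs_of_pos hNx,
              inv_mul_cancel₀ (ne_of_gt hNx)]
          have h1 := hcon _ (V.smul_mem _ hx) hN1
          have h2 := hcon _ (V.smul_mem _ (V.neg_mem hx)) hN2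
          rw [map_smul, smul_eq_mul] at h1
          rw [map_smul, map_neg, smul_eq_mul] at h2
          have habs : |(N x)⁻¹ * φ x| < 8/9 * lam := by
            rcases abs_cases ((N x)⁻¹ * φ x) with ⟨he, _⟩ | ⟨he, _⟩
            · rw [he]; exact h1
            · rw [he]; rw [mul_neg] at h2; linarith
          rw [abs_mul, abs_inv, abs_of_pos hNx] at habs
          rw [inv_mul_lt_iff₀ hNx] at habs
          nlinarith
      have hmem : (8/9 * lam) ∈ S := ⟨φ, hφZ, hφne, hb⟩
      have := csInf_le hbdd hmem
      linarith
    have hφv : 0 < φ v := lt_of_lt_of_le (by linarith) hvφ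
    -- reduction step
    set c : ℤ := round (φ θ) with hc
    set θ₁ : Fin n → ℝ := θ - (c : ℝ) • u with hθ₁def
    have hθ₁V : θ₁ ∈ V := V.sub_mem hθ (V.smul_mem _ huV)
    have hφθ₁ : |φ θ₁| ≤ 1/2 := by
      have : φ θ₁ = φ θ - (c : ℝ) := by
        simp [hθ₁def, map_sub, map_smul, hφu]
      rw [this]; exact abs_sub_round _
    set h : Fin n → ℝ := θ₁ - (φ θ₁ / φ v) • v with hhdef
    have hφh : φ h = 0 := by
      simp only [hhdef, map_sub, map_smul, smul_eq_mul]
      field_simp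
      ring
    have hhV : h ∈ V := V.sub_mem hθ₁V (V.smul_mem _ hvV)
    have hres : N (θ₁ - h) ≤ 9/16 / lam := by
      have h1 : θ₁ - h = (φ θ₁ / φ v) • v := by simp [hhdef]
      rw [h1, hNsmul]
      have h2 : |φ θ₁ / φ v| ≤ (1/2) / (8/9 * lam) := by
        rw [abs_div, abs_of_pos hφv]
        exact div_le_div₀ (by norm_num) hφθ₁ (by linarith) hvφ
      calc |φ θ₁ / φ v| * N v ≤ (1/2 / (8/9 * lam)) * 1 := by
            apply mul_le_mul h2 hvN (hNnn v) (by positivity)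
        _ = 9/16 / lam := by field_simp; ring
    -- the next level
    set V₀ : Submodule ℝ (Fin n → ℝ) := V ⊓ LinearMap.ker φ with hV₀def
    set G₀ : Submodule ℤ (Fin n → ℝ) :=
      G ⊓ Submodule.restrictScalars ℤ (LinearMap.ker φ) with hG₀def
    have hG₀G : G₀ ≤ G := inf_le_left
    have hV₀V : V₀ ≤ V := inf_le_left
    have hG₀V₀ : (G₀ : Set (Fin n → ℝ)) ⊆ (V₀ : Set (Fin n → ℝ)) := by
      intro g hg
      rcases hg with ⟨hg1, hg2⟩
      exact ⟨hGV hg1, hg2⟩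
    have hfr : finrank ℝ V₀ = d := by
      obtain ⟨x, hxV, hφx⟩ := hφne
      set φV : V →ₗ[ℝ] ℝ := φ.domRestrict V with hφVdef
      have hrange : LinearMap.range φV = ⊤ := by
        rw [LinearMap.range_eq_top]
        intro y
        refine ⟨(y / φ x) • ⟨x, hxV⟩, ?_⟩
        simp only [hφVdef, LinearMap.domRestrict_apply, SetLike.mk_smul_mk,
          Submodule.coe_smul, map_smul, smul_eq_mul]
        field_simp
      have hrn := LinearMap.finrank_range_add_finrank_ker φV
      rw [hrange, finrank_top, Module.finrank_self, hV] at hrn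
      have hiso : Submodule.comap V.subtype V₀ = LinearMap.ker φV := by
        ext y
        simp only [Submodule.mem_comap, LinearMap.mem_ker, hV₀def,
          Submodule.mem_inf, hφVdef, LinearMap.domRestrict_apply]
        exact ⟨fun h => h.2, fun h => ⟨y.2, h⟩⟩
      have heq : finrank ℝ ↥(Submodule.comap V.subtype V₀) = finrank ℝ ↥V₀ :=
        LinearEquiv.finrank_eq (Submodule.comapSubtypeEquivOfLe (inf_le_left : V₀ ≤ V))
      rw [hiso] at heq
      omega
    have hspan₀ : V₀ ≤ Submodule.span ℝ (G₀ : Set (Fin n → ℝ)) := by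
      intro x hx
      obtain ⟨hxV, hxk⟩ := hx
      have hφx : φ x = 0 := by simpa [LinearMap.mem_ker] using hxk
      have hxs : x ∈ Submodule.span ℝ (G : Set (Fin n → ℝ)) := hspan hxV
      rw [mem_span_set'] at hxs
      obtain ⟨m, f, g, hsum⟩ := hxs
      choose z hz using fun i : Fin m => hφZ (g i) (g i).2
      have hsum2 : (∑ i, f i * (z i : ℝ)) = φ x := by
        rw [← hsum, map_sum]
        congr 1
        ext i
        rw [map_smul, hz i, smul_eq_mul]
      have hx2 : x = ∑ i, f i • (((g i) : Fin n → ℝ) - (z i : ℝ) • u) := by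
        have e1 : ∑ i, f i • (((g i) : Fin n → ℝ) - (z i : ℝ) • u)
            = (∑ i, f i • ((g i) : Fin n → ℝ)) - (∑ i, f i * (z i : ℝ)) • u := by
          rw [Finset.sum_smul]
          rw [← Finset.sum_sub_distrib]
          congr 1
          ext i
          rw [smul_sub, mul_smul]
        rw [e1, hsum, hsum2, hφx, zero_smul, sub_zero]
      rw [hx2]
      apply Submodule.sum_mem
      intro i _
      apply Submodule.smul_mem
      apply Submodule.subset_span
      have hgu : ((g i) : Fin n → ℝ) - (z i : ℝ) • u ∈ G := by
        have h1 : (z i : ℝ) • u = (z i) • u := (Int.cast_smul_eq_zsmul ℝ (z i) u).symm ▸ rfl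
        rw [show ((g i) : Fin n → ℝ) - (z i : ℝ) • u
            = ((g i) : Fin n → ℝ) - (z i) • u by rw [Int.cast_smul_eq_zsmul]]
        exact G.sub_mem (g i).2 (G.smul_mem _ huG)
      refine ⟨hgu, ?_⟩
      show ((g i) : Fin n → ℝ) - (z i : ℝ) • u ∈ LinearMap.ker φ
      rw [LinearMap.mem_ker, map_sub, map_smul, hφu, hz i, smul_eq_mul, mul_one, sub_self]
    have hsepd₀ : ∀ x ∈ V₀, x ≠ 0 → ∃ ψ : (Fin n → ℝ) →ₗ[ℝ] ℝ,
        (∀ g ∈ G₀, ∃ z : ℤ, ψ g = (z : ℝ)) ∧ ψ x ≠ 0 := by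
      intro x hx hx0
      obtain ⟨ψ, hψZ, hψx⟩ := hsepd x (hV₀V hx) hx0
      exact ⟨ψ, fun g hg => hψZ g (hG₀G hg), hψx⟩
    have hdual₀ : ∀ ψ : (Fin n → ℝ) →ₗ[ℝ] ℝ, (∃ x ∈ V₀, ψ x ≠ 0) →
        (∀ g ∈ G₀, ∃ z : ℤ, ψ g = (z : ℝ)) →
        ∀ C' : ℝ, (∀ x ∈ V₀, |ψ x| ≤ C' * N x) → 7/16 * lam ≤ C' := by
      intro ψ hψne hψZ C' hψC'
      obtain ⟨x₁, hx₁V₀, hψx₁⟩ := hψne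
      have hx₁0 : x₁ ≠ 0 := by rintro rfl; simp at hψx₁
      have hC'0 : 0 < C' := by
        have h1 := hψC' x₁ hx₁V₀
        have h2 : 0 < |ψ x₁| := abs_pos.2 hψx₁
        nlinarith [hNpos x₁ hx₁0]
      obtain ⟨ξ, hξ1, hξ2⟩ := exists_extension_of_le_sublinear
        ⟨V₀, ψ.domRestrict V₀⟩ (fun x => C' * N x)
        (fun c hc x => by
          show C' * N (c • x) = c * (C' * N x)
          rw [hNsmul, abs_of_pos hc]; ring)
        (fun x y => by
          show C' * N (x + y) ≤ C' * N x + C' * N y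
          have := hNadd x y; nlinarith)
        (by
          rintro ⟨x, hx⟩
          have h1 := hψC' x hx
          have h2 : ψ x ≤ |ψ x| := le_abs_self _
          show ψ.domRestrict V₀ ⟨x, hx⟩ ≤ C' * N x
          rw [LinearMap.domRestrict_apply]
          exact le_trans h2 h1)
      have hξV₀ : ∀ x ∈ V₀, ξ x = ψ x := by
        intro x hx
        exact hξ1 ⟨x, hx⟩
      have hξabs : ∀ x, |ξ x| ≤ C' * N x := by
        intro x
        rcases abs_cases (ξ x) with ⟨he, _⟩ | ⟨he, _⟩
        · rw [he]; exact hξ2 x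
        · rw [he]
          have h1 := hξ2 (-x)
          have h2 : N (-x) = N x := by
            have := hNsmul (-1 : ℝ) x
            simpa using this
          rw [map_neg, h2] at h1
          linarith
      set kk : ℤ := round (ξ u) with hkk
      set ζ : (Fin n → ℝ) →ₗ[ℝ] ℝ := ξ - (ξ u - (kk : ℝ)) • φ with hζdef
      have hζapp : ∀ x, ζ x = ξ x - (ξ u - (kk : ℝ)) * φ x := by
        intro x
        simp [hζdef, LinearMap.sub_apply, LinearMap.smul_apply, smul_eq_mul]
      have hζZ : ∀ g ∈ G, ∃ z : ℤ, ζ g = (z : ℝ) := by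
        intro g hg
        obtain ⟨z, hzg⟩ := hφZ g hg
        have hguG : g - (z : ℝ) • u ∈ G := by
          rw [Int.cast_smul_eq_zsmul]
          exact G.sub_mem hg (G.smul_mem _ huG)
        have hguker : g - (z : ℝ) • u ∈ LinearMap.ker φ := by
          rw [LinearMap.mem_ker, map_sub, map_smul, hφu, hzg, smul_eq_mul, mul_one, sub_self]
        have hguV₀ : g - (z : ℝ) • u ∈ V₀ := ⟨hGV hguG, hguker⟩
        have hguG₀ : g - (z : ℝ) • u ∈ G₀ := ⟨hguG, hguker⟩
        obtain ⟨z', hz'⟩ := hψZ _ hguG₀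
        refine ⟨z' + z * kk, ?_⟩
        have e1 : ξ g = (z' : ℝ) + (z : ℝ) * ξ u := by
          have e2 : ξ (g - (z : ℝ) • u) = (z' : ℝ) := by
            rw [hξV₀ _ hguV₀]; exact hz'
          rw [map_sub, map_smul, smul_eq_mul] at e2
          linarith
        rw [hζapp, e1, hzg]
        push_cast
        ring
      have hζne : ∃ x ∈ V, ζ x ≠ 0 := by
        refine ⟨x₁, hV₀V hx₁V₀, ?_⟩
        have hφx₁ : φ x₁ = 0 := by
          have := hx₁V₀.2
          simpa [LinearMap.mem_ker] using this
        rw [hζapp, hφx₁, mul_zero, sub_zero, hξV₀ _ hx₁V₀]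
        exact hψx₁
      have hζC : ∀ x ∈ V, |ζ x| ≤ (C' + C/2) * N x := by
        intro x hx
        have h1 := hξabs x
        have h2 := hφC x hx
        have h3 : |ξ u - (kk : ℝ)| ≤ 1/2 := abs_sub_round _
        have h4 : |ζ x| ≤ |ξ x| + |ξ u - (kk : ℝ)| * |φ x| := by
          rw [hζapp]
          refine le_trans (abs_sub _ _) ?_
          rw [abs_mul]
        have h5 : |ξ u - (kk : ℝ)| * |φ x| ≤ 1/2 * (C * N x) := by
          apply mul_le_mul h3 h2 (abs_nonneg _) (by norm_num)
        have := hNnn x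
        nlinarith
      have hlow : lam ≤ C' + C/2 := csInf_le hbdd ⟨ζ, hζZ, hζne, hζC⟩
      linarith
    obtain ⟨w₀, hw₀G, hw₀⟩ := ih V₀ hfr G₀ hG₀V₀ hspan₀ hsepd₀ (7/16 * lam)
      (by linarith) hdual₀ h ⟨hhV, by simpa [LinearMap.mem_ker] using hφh⟩
    refine ⟨(c : ℝ) • u + w₀, ?_, ?_⟩
    · apply G.add_mem _ (hG₀G hw₀G)
      have : (c : ℝ) • u = c • u := by
        exact Int.cast_smul_eq_zsmul ℝ c u
      rw [this]; exact G.smul_mem _ huG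
    · have key : θ - ((c:ℝ) • u + w₀) = (θ₁ - h) + (h - w₀) := by
        simp [hθ₁def]; abel
      rw [key]
      calc N ((θ₁ - h) + (h - w₀)) ≤ N (θ₁ - h) + N (h - w₀) := hNadd _ _
        _ ≤ 9/16 / lam + covB d / (7/16 * lam) := add_le_add hres hw₀
        _ = covB (d+1) / lam := by
            rw [covB_succ]; field_simp
        _ ≤ covB (d+1) / Λ := by
            apply div_le_div_of_nonneg_left (covB_nonneg _) hΛ hlamΛ

lemma covB_lt : ∀ m : ℕ, 2 ≤ m → covB m < (m:ℝ)^2 * (Nat.factorial m : ℝ) / 2 := by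
  intro m hm
  induction m with
  | zero => omega
  | succ d ihd =>
    rcases Nat.lt_or_ge d 2 with h2 | h2
    · have hd1 : d = 1 := by omega
      subst hd1
      norm_num [covB, Nat.factorial]
    · have ih := ihd h2
      have h4 : (2:ℝ) ≤ (d:ℝ) := by exact_mod_cast h2
      have hf : (2:ℝ) ≤ (Nat.factorial d : ℝ) := by
        exact_mod_cast Nat.factorial_le h2
      have hX : (4:ℝ) ≤ (d:ℝ)^2 * (Nat.factorial d:ℝ)/2 := by nlinarith
      have hfsucc : (Nat.factorial (d+1) : ℝ) = ((d:ℝ)+1) * (Nat.factorial d:ℝ) := by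
        rw [Nat.factorial_succ]; push_cast; ring
      have hstep : (3:ℝ) * ((d:ℝ)^2*(Nat.factorial d:ℝ)/2)
          ≤ (((d+1 : ℕ)):ℝ)^2 * (Nat.factorial (d+1):ℝ)/2 := by
        rw [hfsucc]; push_cast
        nlinarith
      rw [covB_succ]
      push_cast at hstep ⊢
      nlinarith

end Cover

open scoped BigOperators

set_option maxHeartbeats 2000000
set_option synthInstance.maxHeartbeats 400000

/-- **Ergodization time, non-resonant case.** For a non-resonant `α ∈ ℝⁿ` with a component
equal to `1`, and `0 < δ ≤ n²/(n+2)`, every `θ ∈ ℝⁿ` is `δ`-approximated modulo `ℤⁿ`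
(in sup-norm) by `t·α` with `0 ≤ t ≤ C_n·Ψ_α(2C_n/δ)`, where `C_n = n²·n!`. -/
theorem ergodization_time_bound_nonresonant {n : ℕ} (hn : 2 ≤ n)
    (α : Fin n → ℝ)
    (hnr : ∀ k : Fin n → ℤ, k ≠ 0 → (∑ i, (k i : ℝ) * α i) ≠ 0)
    (hα1 : ∃ i, α i = 1)
    (Ψ : ℝ → ℝ)
    (hΨ : ∀ Q : ℝ, Ψ Q = sSup {r : ℝ | ∃ k : Fin n → ℤ, k ≠ 0 ∧
      ‖(fun i => (k i : ℝ))‖ ≤ Q ∧ r = |∑ i, (k i : ℝ) * α i|⁻¹})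
    (Cn : ℝ) (hCn : Cn = (n : ℝ) ^ 2 * (Nat.factorial n : ℝ))
    (δ : ℝ) (hδ : 0 < δ) (hδ' : δ ≤ (n : ℝ) ^ 2 / (n + 2 : ℝ))
    (θ : Fin n → ℝ) :
    ∃ t : ℝ, 0 ≤ t ∧ t ≤ Cn * Ψ (2 * Cn / δ) ∧
      ∃ k : Fin n → ℤ, ‖t • α - θ - (fun i => (k i : ℝ))‖ ≤ δ := by
  classical
  have hn0 : 0 < n := by omega
  have hfac1 : (1:ℝ) ≤ (Nat.factorial n : ℝ) := by
    exact_mod_cast Nat.one_le_iff_ne_zero.mpr (Nat.factorial_pos n).ne'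
  have hnR : (2:ℝ) ≤ (n:ℝ) := by exact_mod_cast hn
  have hCn0 : 0 < Cn := by rw [hCn]; nlinarith
  set Q : ℝ := 2 * Cn / δ with hQdef
  have hδCn : δ ≤ 2 * Cn := by
    have h1 : (n:ℝ)^2 / (n + 2 : ℝ) ≤ (n:ℝ)^2 := by
      apply div_le_self (by positivity) (by linarith)
    have h2 : (n:ℝ)^2 ≤ 2 * Cn := by rw [hCn]; nlinarith
    linarith
  have hQ1 : 1 ≤ Q := by
    rw [hQdef, le_div_iff₀ hδ, one_mul]; exact hδCn
  have hQ0 : 0 < Q := lt_of_lt_of_le one_pos hQ1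
  -- the finite minimization
  set K : Set (Fin n → ℤ) := {k | k ≠ 0 ∧ ‖(fun i => (k i : ℝ))‖ ≤ Q} with hKdef
  have hKfin : K.Finite := by
    apply Set.Finite.subset (Set.Finite.pi (fun i : Fin n => Set.finite_Icc (-⌈Q⌉) ⌈Q⌉))
    intro k hk
    intro i _
    have h1 : |(k i : ℝ)| ≤ Q := by
      have := norm_le_pi_norm (fun i => ((k i : ℝ))) i
      rw [Real.norm_eq_abs] at this
      exact le_trans this hk.2
    have h2 : |(k i : ℝ)| ≤ (⌈Q⌉ : ℝ) := le_trans h1 (Int.le_ceil Q)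
    have h3 : |k i| ≤ ⌈Q⌉ := by
      have h4 : ((|k i| : ℤ) : ℝ) ≤ ((⌈Q⌉ : ℤ) : ℝ) := by rw [Int.cast_abs]; exact h2
      exact_mod_cast h4
    rw [abs_le] at h3
    simp only [Set.mem_Icc]
    exact ⟨h3.1, h3.2⟩
  have hKne : K.Nonempty := by
    refine ⟨(fun _ => 1), ?_, ?_⟩
    · intro hc
      have := congrFun hc ⟨0, hn0⟩
      simp at this
    · rw [pi_norm_le_iff_of_nonneg (by linarith)]
      intro i
      simp only [Int.cast_one, Real.norm_eq_abs, abs_one]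
      exact hQ1
  obtain ⟨k₀, hk₀K, hk₀min⟩ := Set.exists_min_image K
    (fun k => |∑ i, (k i : ℝ) * α i|) hKfin hKne
  set M : ℝ := |∑ i, (k₀ i : ℝ) * α i| with hMdef
  have hM0 : 0 < M := abs_pos.2 (hnr k₀ hk₀K.1)
  -- Ψ lower bound
  have hΨM : M⁻¹ ≤ Ψ Q := by
    rw [hΨ Q]
    apply le_csSup
    · refine ⟨M⁻¹, ?_⟩
      rintro r ⟨k, hk1, hk2, rfl⟩
      have := hk₀min k ⟨hk1, hk2⟩
      exact inv_anti₀ hM0 this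
    · exact ⟨k₀, hk₀K.1, hk₀K.2, rfl⟩
  have hΨ0 : 0 < Ψ Q := lt_of_lt_of_le (by positivity) hΨM
  set T : ℝ := Cn / (2 * M) with hTdef
  have hT0 : 0 < T := by rw [hTdef]; positivity
  -- the lattice of integer vectors
  set Gz : Submodule ℤ (Fin n → ℝ) :=
  { carrier := {x | ∀ i, ∃ z : ℤ, x i = (z : ℝ)}
    add_mem' := by
      rintro x y hx hy i
      obtain ⟨a, ha⟩ := hx i
      obtain ⟨b, hb⟩ := hy i
      exact ⟨a + b, by simp only [Pi.add_apply, ha, hb]; push_cast; ring⟩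
    zero_mem' := fun i => ⟨0, by simp⟩
    smul_mem' := by
      rintro c x hx i
      obtain ⟨a, ha⟩ := hx i
      refine ⟨c * a, ?_⟩
      have : (c • x) i = (c : ℝ) * x i := by
        simp [Pi.smul_apply, zsmul_eq_mul]
      rw [this, ha]
      push_cast
      ring } with hGzdef
  have hGzmem : ∀ x : Fin n → ℝ, x ∈ Gz ↔ ∀ i, ∃ z : ℤ, x i = (z : ℝ) := fun x => Iff.rfl
  -- single basis vectors
  set e : Fin n → (Fin n → ℝ) := fun i => (fun j => if i = j then (1:ℝ) else 0) with hedef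
  have heGz : ∀ i, e i ∈ Gz := by
    intro i j
    refine ⟨if i = j then 1 else 0, ?_⟩
    by_cases h : i = j <;> simp [hedef, h]
  -- expansion of functionals
  have hexpand : ∀ (φ : (Fin n → ℝ) →ₗ[ℝ] ℝ) (x : Fin n → ℝ),
      φ x = ∑ i, x i * φ (e i) := by
    intro φ x
    conv_lhs => rw [pi_eq_sum_univ x, map_sum]
    congr 1
    ext i
    rw [map_smul, smul_eq_mul, hedef]
  -- separating functionals
  have hsepd : ∀ x ∈ (⊤ : Submodule ℝ (Fin n → ℝ)), x ≠ 0 →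
      ∃ φ : (Fin n → ℝ) →ₗ[ℝ] ℝ, (∀ g ∈ Gz, ∃ z : ℤ, φ g = (z : ℝ)) ∧ φ x ≠ 0 := by
    intro x _ hx
    obtain ⟨i, hi⟩ := Function.ne_iff.mp hx
    refine ⟨LinearMap.proj i, ?_, by simpa using hi⟩
    intro g hg
    exact hg i
  -- span
  have hspan : (⊤ : Submodule ℝ (Fin n → ℝ)) ≤ Submodule.span ℝ (Gz : Set (Fin n → ℝ)) := by
    intro x _
    rw [pi_eq_sum_univ x]
    apply Submodule.sum_mem
    intro i _
    apply Submodule.smul_mem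
    exact Submodule.subset_span (heGz i)
  -- the gauge norm
  set Nf : (Fin n → ℝ) → ℝ := NG α δ T with hNf
  -- dual lower bound
  have hdual : ∀ φ : (Fin n → ℝ) →ₗ[ℝ] ℝ, (∃ x ∈ (⊤ : Submodule ℝ (Fin n → ℝ)), φ x ≠ 0) →
      (∀ g ∈ Gz, ∃ z : ℤ, φ g = (z : ℝ)) →
      ∀ C : ℝ, (∀ x ∈ (⊤ : Submodule ℝ (Fin n → ℝ)), |φ x| ≤ C * Nf x) → Cn / 2 ≤ C := by
    intro φ hφne hφZ C hC
    choose z hz using fun i => hφZ (e i) (heGz i)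
    have hφx : ∀ x, φ x = ∑ i, x i * (z i : ℝ) := by
      intro x
      rw [hexpand φ x]
      congr 1
      ext i
      rw [hz i]
    have hzne : (z : Fin n → ℤ) ≠ 0 := by
      intro hc
      obtain ⟨x, _, hxne⟩ := hφne
      apply hxne
      rw [hφx]
      apply Finset.sum_eq_zero
      intro i _
      rw [show z i = 0 from congrFun hc i]
      simp
    have hC0 : 0 < C := by
      obtain ⟨x, _, hxne⟩ := hφne
      have hx0 : x ≠ 0 := by rintro rfl; simp at hxne
      have h1 := hC x trivial
      have h2 : 0 < |φ x| := abs_pos.2 hxne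
      nlinarith [NG_pos α δ T hδ hT0 x hx0]
    set A : ℝ := ∑ i, (z i : ℝ) * α i with hAdef
    set σ : ℝ := if 0 ≤ A then 1 else -1 with hσdef
    have hσabs : |σ| = 1 := by
      rw [hσdef]; split <;> norm_num
    have hσA : σ * A = |A| := by
      rw [hσdef]
      rcases le_or_gt 0 A with h | h
      · rw [if_pos h, one_mul, abs_of_nonneg h]
      · rw [if_neg (not_le.mpr h), abs_of_neg h]; ring
    set sg : Fin n → ℝ := fun i => ((z i).sign : ℝ) with hsgdef
    set xs : Fin n → ℝ := (T * σ) • α + δ • sg with hxsdef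
    have hsgbd : ∀ i, |sg i| ≤ 1 := by
      intro i
      show |((z i).sign : ℝ)| ≤ 1
      rcases lt_trichotomy (z i) 0 with h | h | h
      · rw [Int.sign_eq_neg_one_of_neg h]; norm_num
      · rw [h]; norm_num
      · rw [Int.sign_eq_one_of_pos h]; norm_num
    have hzsg : ∀ i, (z i : ℝ) * sg i = |(z i : ℝ)| := by
      intro i
      have h := congrArg (fun m : ℤ => (m : ℝ)) (Int.mul_sign_self (z i))
      push_cast [Nat.cast_natAbs] at h
      show (z i : ℝ) * ((z i).sign : ℝ) = |(z i : ℝ)|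
      exact_mod_cast h
    -- φ xs = T * |A| + δ * ∑ |z i|
    have hφxs : φ xs = T * |A| + δ * ∑ i, |(z i : ℝ)| := by
      rw [hφx]
      have h1 : ∀ i, xs i = T * σ * α i + δ * sg i := by
        intro i
        rw [hxsdef]
        simp [Pi.add_apply, Pi.smul_apply, smul_eq_mul]
      calc ∑ i, xs i * (z i : ℝ)
          = ∑ i, (T * σ * ((z i : ℝ) * α i) + δ * ((z i : ℝ) * sg i)) := by
            apply Finset.sum_congr rfl
            intro i _
            rw [h1 i]; ring
        _ = T * σ * (∑ i, (z i : ℝ) * α i) + δ * ∑ i, ((z i : ℝ) * sg i) := by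
            rw [Finset.sum_add_distrib, Finset.mul_sum, Finset.mul_sum]
        _ = T * |A| + δ * ∑ i, |(z i : ℝ)| := by
            rw [← hAdef]
            have e2 : ∑ i, ((z i : ℝ) * sg i) = ∑ i, |(z i : ℝ)| :=
              Finset.sum_congr rfl (fun i _ => hzsg i)
            rw [e2, mul_assoc, hσA]
    -- Nf xs ≤ 1
    have hNxs : Nf xs ≤ 1 := by
      rw [hNf]
      refine le_trans (NG_le α δ T hδ hT0 xs (T * σ)) ?_
      apply max_le
      · have e1 : xs - (T * σ) • α = δ • sg := by rw [hxsdef]; abel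
        rw [e1, norm_smul, Real.norm_eq_abs, abs_of_pos hδ]
        have hsg : ‖sg‖ ≤ 1 := by
          rw [pi_norm_le_iff_of_nonneg zero_le_one]
          intro i
          rw [Real.norm_eq_abs]
          exact hsgbd i
        calc δ⁻¹ * (δ * ‖sg‖) = ‖sg‖ := by field_simp
          _ ≤ 1 := hsg
      · rw [abs_mul, abs_of_pos hT0, hσabs, mul_one, inv_mul_le_iff₀ hT0, mul_one]
    -- conclude
    have hφxsC : φ xs ≤ C := by
      have h1 := hC xs trivial
      have h2 : φ xs ≤ |φ xs| := le_abs_self _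
      have h3 : C * Nf xs ≤ C * 1 := mul_le_mul_of_nonneg_left hNxs hC0.le
      linarith
    have hsum_nonneg : (0:ℝ) ≤ ∑ i, |(z i : ℝ)| :=
      Finset.sum_nonneg fun i _ => abs_nonneg _
    rcases le_or_gt (‖(fun i => ((z i) : ℝ))‖) Q with hc | hc
    · -- small case : use the minimum M
      have hzK : z ∈ K := ⟨hzne, hc⟩
      have hMA : M ≤ |A| := hk₀min z hzK
      have h1 : T * M ≤ T * |A| := mul_le_mul_of_nonneg_left hMA hT0.le
      have h2 : T * M = Cn / 2 := by
        rw [hTdef]; field_simp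
      nlinarith [mul_nonneg hδ.le hsum_nonneg]
    · -- large case : the ℓ¹ norm is large
      have h1 : ‖(fun i => ((z i) : ℝ))‖ ≤ ∑ i, |(z i : ℝ)| := by
        rw [pi_norm_le_iff_of_nonneg hsum_nonneg]
        intro i
        rw [Real.norm_eq_abs]
        exact Finset.single_le_sum (fun j _ => abs_nonneg ((z j : ℝ))) (Finset.mem_univ i)
      have h2 : δ * Q ≤ δ * ∑ i, |(z i : ℝ)| := by
        apply mul_le_mul_of_nonneg_left _ hδ.le
        linarith
      have h3 : δ * Q = 2 * Cn := by
        rw [hQdef]; field_simp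
      nlinarith [mul_nonneg hT0.le (abs_nonneg A)]
  -- apply the covering theorem
  have hfr : finrank ℝ (⊤ : Submodule ℝ (Fin n → ℝ)) = n := by
    rw [finrank_top]
    exact Module.finrank_fin_fun ℝ
  have hΛ0 : 0 < Cn / 2 := by positivity
  obtain ⟨w, hwG, hwN⟩ := cover Nf
    (fun x y => NG_add α δ T hδ hT0 x y)
    (fun c x => NG_smul α δ T hδ hT0 c x)
    (fun x hx => NG_pos α δ T hδ hT0 x hx)
    (δ + T * ‖α‖)⁻¹ (by positivity) (fun x => NG_lb α δ T hδ hT0 x)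
    n ⊤ hfr Gz (fun x _ => trivial) hspan hsepd (Cn / 2) hΛ0 hdual
    (θ - T • α) trivial
  have hcovlt : covB n / (Cn / 2) < 1 := by
    rw [div_lt_one hΛ0]
    have := covB_lt n hn
    rw [hCn]
    linarith
  have hwN1 : Nf (θ - T • α - w) < 1 := lt_of_le_of_lt hwN hcovlt
  obtain ⟨s, hs1, hs2⟩ := NG_extract α δ T hδ hT0 _ hwN1
  refine ⟨T + s, by linarith [abs_lt.mp hs2], ?_, ?_⟩
  · have h2T : T + s < 2 * T := by
      have := (abs_lt.mp hs2).2
      linarith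
    have h3 : 2 * T = Cn * M⁻¹ := by
      rw [hTdef]; field_simp
    have h4 : Cn * M⁻¹ ≤ Cn * Ψ Q := mul_le_mul_of_nonneg_left hΨM hCn0.le
    rw [hQdef] at h4
    linarith
  · choose kz hkz using fun i => (hGzmem w).mp hwG i
    refine ⟨fun i => -(kz i), ?_⟩
    have e1 : (fun i => ((-(kz i) : ℤ) : ℝ)) = -w := by
      ext i
      simp only [Pi.neg_apply]
      rw [hkz i]
      push_cast
      ring
    have e2 : (T + s) • α - θ - (fun i => ((-(kz i) : ℤ) : ℝ))
        = -(θ - T • α - w - s • α) := by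
      rw [e1, add_smul]
      abel
    rw [e2, norm_neg]
    exact hs1.le
end

section
/- Let n ≥ 2, let α ∈ ℝⁿ \ {0}, let F_α be the smallest rational subspace of ℝⁿ containing α, d = dim F_α, Λ_α = F_α ∩ ℤⁿ. Let Q > 0 and suppose ω₁, …, ω_d ∈ ℚⁿ and positive integers q₁, …, q_d satisfy: q_j·ω_j ∈ ℤⁿ and |α − ω_j|_∞ ≤ d/(q_j·Q) for each j, and the vectors q₁ω₁, …, q_dω_d form a ℤ-basis of Λ_α. Then for every point θ ∈ F_α there exist t₁, …, t_d ∈ [0,1) such that, setting T = t₁q₁ + ⋯ + t_dq_d, one has 0 ≤ T ≤ q₁ + ⋯ + q_d and there exists k ∈ Λ_α with |T·α − θ − k|_∞ ≤ d²/Q. -/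
open scoped BigOperators

/-- A subspace of `ℝⁿ` is rational if it is spanned by vectors with rational components. -/
def IsRationalSubspace {n : ℕ} (F : Submodule ℝ (Fin n → ℝ)) : Prop :=
  ∃ s : Set (Fin n → ℚ), F = Submodule.span ℝ ((fun v : Fin n → ℚ => fun i => (v i : ℝ)) '' s)

/-- `F` is the smallest rational subspace of `ℝⁿ` containing `α`. -/
def IsSmallestRationalSubspace {n : ℕ} (α : Fin n → ℝ) (F : Submodule ℝ (Fin n → ℝ)) : Prop :=
  IsRationalSubspace F ∧ α ∈ F ∧
    ∀ F' : Submodule ℝ (Fin n → ℝ), IsRationalSubspace F' → α ∈ F' → F ≤ F'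

/-- The lattice `F ∩ ℤⁿ`: points of `F` with integer coordinates. -/
def latticeOf {n : ℕ} (F : Submodule ℝ (Fin n → ℝ)) : Set (Fin n → ℝ) :=
  {x | x ∈ F ∧ ∀ i, ∃ m : ℤ, x i = (m : ℝ)}

/-- Standard dot product on `ℝⁿ`. -/
def dot {n : ℕ} (x y : Fin n → ℝ) : ℝ := ∑ i, x i * y i

/-- `b` is a `ℤ`-basis of the lattice `Λ`. -/
def IsZBasisOf {n d : ℕ} (Λ : Set (Fin n → ℝ)) (b : Fin d → (Fin n → ℝ)) : Prop :=
  (∀ j, b j ∈ Λ) ∧ ∀ x ∈ Λ, ∃! c : Fin d → ℤ, x = ∑ j, (c j : ℝ) • b j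

/-- **Proof of Theorem 1 from the Proposition.** If `ω₁, …, ω_d` are rational approximations
of `α` with denominators `q₁, …, q_d` such that `|α − ω_j|_∞ ≤ d/(q_j Q)` and
`q₁ω₁, …, q_dω_d` is a `ℤ`-basis of `Λ_α`, then every `θ ∈ F_α` is `(d²/Q)`-approximated
modulo `Λ_α` by `T·α` where `T = t₁q₁ + ⋯ + t_dq_d` for some `t_j ∈ [0,1)`,
so that `0 ≤ T ≤ q₁ + ⋯ + q_d`. -/
theorem approximation_from_basis {n : ℕ} (hn : 2 ≤ n)
    (α : Fin n → ℝ) (hα : α ≠ 0)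
    (F : Submodule ℝ (Fin n → ℝ)) (hF : IsSmallestRationalSubspace α F)
    (d : ℕ) (hd : d = Module.finrank ℝ F)
    (Q : ℝ) (hQ : 0 < Q)
    (ω : Fin d → (Fin n → ℝ)) (q : Fin d → ℕ)
    (hq : ∀ j, 1 ≤ q j)
    (hωrat : ∀ j i, ∃ r : ℚ, ω j i = (r : ℝ))
    (hint : ∀ j i, ∃ m : ℤ, (q j : ℝ) * ω j i = (m : ℝ))
    (happrox : ∀ j, ‖α - ω j‖ ≤ (d : ℝ) / ((q j : ℝ) * Q))
    (hbasis : IsZBasisOf (latticeOf F) (fun j => (q j : ℝ) • ω j))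
    (θ : Fin n → ℝ) (hθ : θ ∈ F) :
    ∃ t : Fin d → ℝ, (∀ j, 0 ≤ t j ∧ t j < 1) ∧
      0 ≤ ∑ j, t j * (q j : ℝ) ∧
      ∑ j, t j * (q j : ℝ) ≤ ∑ j, (q j : ℝ) ∧
      ∃ k ∈ latticeOf F, ‖(∑ j, t j * (q j : ℝ)) • α - θ - k‖ ≤ (d : ℝ) ^ 2 / Q := by
  
  classical
  set b : Fin d → (Fin n → ℝ) := fun j => (q j : ℝ) • ω j with hb
  -- every element of F is a real combination of the b j
  have hspan : F ≤ Submodule.span ℝ (Set.range b) := by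
    obtain ⟨s, hs⟩ := hF.1
    rw [hs]
    apply Submodule.span_le.2
    rintro v ⟨w, hw, rfl⟩
    show (fun i => (w i : ℝ)) ∈ (Submodule.span ℝ (Set.range b) : Set (Fin n → ℝ))
    set vr : Fin n → ℝ := fun i => (w i : ℝ) with hvr
    set N : ℕ := ∏ i, (w i).den with hN
    have hNpos : 0 < N := Finset.prod_pos (fun i _ => (w i).pos)
    have hvrF : vr ∈ F := by
      rw [hs]
      exact Submodule.subset_span ⟨w, hw, rfl⟩
    have hlat : (N : ℝ) • vr ∈ latticeOf F := by
      refine ⟨Submodule.smul_mem _ _ hvrF, fun i => ?_⟩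
      obtain ⟨e, he⟩ : (w i).den ∣ N := Finset.dvd_prod_of_mem _ (Finset.mem_univ i)
      refine ⟨(w i).num * e, ?_⟩
      have h1 : ((w i).den : ℚ) * (w i) = (w i).num := by
        exact_mod_cast Rat.den_mul_eq_num (w i)
      have h2 : (N : ℚ) * (w i) = ((w i).num * e : ℤ) := by
        rw [he]
        push_cast
        rw [mul_comm ((w i).den : ℚ) (e:ℚ), mul_assoc, h1]
        ring
      have : ((N : ℝ) • vr) i = (N : ℝ) * (w i : ℝ) := rfl
      rw [this]
      exact_mod_cast congrArg (fun x : ℚ => (x : ℝ)) h2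
    obtain ⟨c, hc, -⟩ := hbasis.2 _ hlat
    have hNne : (N : ℝ) ≠ 0 := by positivity
    have : vr = (N : ℝ)⁻¹ • ((N : ℝ) • vr) := by
      rw [smul_smul, inv_mul_cancel₀ hNne, one_smul]
    rw [this, hc]
    exact Submodule.smul_mem _ _ (Submodule.sum_mem _ (fun j _ =>
      Submodule.smul_mem _ _ (Submodule.subset_span ⟨j, rfl⟩)))
  -- coefficients of θ
  obtain ⟨c, hc⟩ := (Submodule.mem_span_range_iff_exists_fun ℝ).1 (hspan hθ)
  set t : Fin d → ℝ := fun j => Int.fract (c j) with ht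
  have htj : ∀ j, 0 ≤ t j ∧ t j < 1 := fun j => ⟨Int.fract_nonneg _, Int.fract_lt_one _⟩
  have hq0 : ∀ j, (0:ℝ) < (q j : ℝ) := fun j => by exact_mod_cast Nat.lt_of_lt_of_le Nat.zero_lt_one (hq j)
  refine ⟨t, htj, ?_, ?_, ?_⟩
  · exact Finset.sum_nonneg fun j _ => mul_nonneg (htj j).1 (hq0 j).le
  · apply Finset.sum_le_sum
    intro j _
    calc t j * (q j : ℝ) ≤ 1 * (q j : ℝ) := by
          apply mul_le_mul_of_nonneg_right (htj j).2.le (hq0 j).le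
      _ = (q j : ℝ) := one_mul _
  · -- the lattice point
    set k' : Fin n → ℝ := ∑ j, (⌊c j⌋ : ℝ) • b j with hk'
    have hk'lat : k' ∈ latticeOf F := by
      constructor
      · exact Submodule.sum_mem _ (fun j _ => Submodule.smul_mem _ _ ((hbasis.1 j).1))
      · intro i
        have : ∀ j, ∃ m : ℤ, b j i = (m : ℝ) := fun j => hint j i
        choose m hm using this
        refine ⟨∑ j, ⌊c j⌋ * m j, ?_⟩
        have : k' i = ∑ j, (⌊c j⌋ : ℝ) * b j i := by
          rw [hk']
          simp [Finset.sum_apply]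
        rw [this]
        push_cast
        exact Finset.sum_congr rfl fun j _ => by rw [hm j]
    refine ⟨-k', ⟨Submodule.neg_mem _ hk'lat.1, fun i => ?_⟩, ?_⟩
    · obtain ⟨m, hm⟩ := hk'lat.2 i
      exact ⟨-m, by simp [hm]⟩
    · -- the key identity
      have key : (∑ j, t j * (q j : ℝ)) • α - θ - (-k') =
          ∑ j, (t j * (q j : ℝ)) • (α - ω j) := by
        rw [← hc, hk', Finset.sum_smul]
        rw [sub_neg_eq_add]
        rw [← Finset.sum_sub_distrib, ← Finset.sum_add_distrib]
        apply Finset.sum_congr rfl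
        intro j _
        have hcj : t j = c j - (⌊c j⌋ : ℝ) := rfl
        rw [hcj, hb]
        simp only
        module
      rw [key]
      calc ‖∑ j, (t j * (q j : ℝ)) • (α - ω j)‖
          ≤ ∑ j, ‖(t j * (q j : ℝ)) • (α - ω j)‖ := norm_sum_le _ _
        _ ≤ ∑ j, t j * ((d:ℝ)/Q) := by
            apply Finset.sum_le_sum
            intro j _
            rw [norm_smul, Real.norm_eq_abs,
              abs_of_nonneg (mul_nonneg (htj j).1 (hq0 j).le)]
            calc t j * (q j:ℝ) * ‖α - ω j‖
                ≤ t j * (q j:ℝ) * ((d:ℝ) / ((q j:ℝ) * Q)) := by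
                  apply mul_le_mul_of_nonneg_left (happrox j)
                    (mul_nonneg (htj j).1 (hq0 j).le)
              _ = t j * ((d:ℝ)/Q) := by
                  have h1 : (q j:ℝ) ≠ 0 := (hq0 j).ne'
                  have h2 : Q ≠ 0 := hQ.ne'
                  field_simp
        _ ≤ ∑ _j : Fin d, 1 * ((d:ℝ)/Q) := by
            apply Finset.sum_le_sum
            intro j _
            apply mul_le_mul_of_nonneg_right (htj j).2.le
            positivity
        _ = (d:ℝ)^2 / Q := by
            simp [Finset.sum_const]
            ring
end

section
/- Let α ∈ ℝ be irrational with |α| ≤ 1, and for Q ≥ 1 define Ψ_α(Q) = max{ |k₁ + k₂·α|⁻¹ : (k₁,k₂) ∈ ℤ², 0 < max(|k₁|,|k₂|) ≤ Q }. Then for every real δ with 0 < δ < 1, the δ-ergodization time of the rotation R_α satisfies N_α(δ) ≤ ⌊Ψ_α(2/δ)⌋ − 1; that is, for every x, y ∈ ℝ there exist an integer k with 0 ≤ k ≤ ⌊Ψ_α(2/δ)⌋ − 1 and an integer m such that |x + k·α − y − m| ≤ δ. -/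
noncomputable def nnorm (x : ℝ) : ℝ := |x - round x|

lemma nnorm_nonneg' (x : ℝ) : 0 ≤ nnorm x := abs_nonneg _

lemma nnorm_le (x : ℝ) (m : ℤ) : nnorm x ≤ |x - m| := by
  have hx0 : x - m = Int.fract x + (⌊x⌋ - m) := by
    unfold Int.fract
    ring
  have hf0 : 0 ≤ Int.fract x := Int.fract_nonneg x
  have hf1 : Int.fract x < 1 := Int.fract_lt_one x
  have hmin : nnorm x = min (Int.fract x) (1 - Int.fract x) := abs_sub_round_eq_min x
  rcases le_or_gt 0 (⌊x⌋ - m) with h | h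
  · have h' : (0:ℝ) ≤ (⌊x⌋ : ℝ) - m := by exact_mod_cast h
    have : Int.fract x ≤ |x - m| := by
      rw [hx0, abs_of_nonneg (by linarith)]
      linarith
    rw [hmin]; exact le_trans (min_le_left _ _) this
  · have h' : ⌊x⌋ - m ≤ -1 := by omega
    have h'' : (⌊x⌋ : ℝ) - m ≤ -1 := by exact_mod_cast h'
    have : 1 - Int.fract x ≤ |x - m| := by
      rw [hx0]
      rcases abs_cases (Int.fract x + ((⌊x⌋:ℝ) - m)) with ⟨he, _⟩ | ⟨he, _⟩ <;> rw [he] <;> linarith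
    rw [hmin]; exact le_trans (min_le_right _ _) this

lemma nnorm_neg (x : ℝ) : nnorm (-x) = nnorm x := by
  apply le_antisymm
  · calc nnorm (-x) ≤ |(-x) - (-(round x) : ℤ)| := nnorm_le _ _
    _ = |x - round x| := by push_cast; rw [show -x - -(round x:ℝ) = -(x - round x) by ring, abs_neg]
    _ = nnorm x := rfl
  · calc nnorm x ≤ |x - (-(round (-x)) : ℤ)| := nnorm_le _ _
    _ = |(-x) - round (-x)| := by push_cast; rw [show x - -(round (-x):ℝ) = -(-x - round (-x)) by ring, abs_neg]
    _ = nnorm (-x) := rfl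


lemma sep_lemma (β : ℝ) (hβ : 0 < β) : ∀ (n : ℕ) (s : Finset ℝ) (hs : s.Nonempty), s.card = n →
    (∀ u ∈ s, ∀ v ∈ s, u ≠ v → β ≤ |u - v|) →
    s.min' hs + ((n : ℝ) - 1) * β ≤ s.max' hs := by
  intro n
  induction n with
  | zero => intro s hs hcard _; exact absurd (Finset.card_eq_zero.mp hcard ▸ hs) (by simp)
  | succ n ih =>
    intro s hs hcard hsep
    rcases Nat.eq_zero_or_pos n with rfl | hn
    · have : s.min' hs ≤ s.max' hs := s.min'_le _ (s.max'_mem hs)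
      push_cast; linarith
    · set x₀ := s.min' hs with hx₀
      set s' := s.erase x₀ with hs'
      have hcard' : s'.card = n := by rw [hs', Finset.card_erase_of_mem (s.min'_mem hs), hcard]; omega
      have hs'ne : s'.Nonempty := Finset.card_pos.mp (by omega)
      have hsub : s' ⊆ s := Finset.erase_subset _ _
      have hsep' : ∀ u ∈ s', ∀ v ∈ s', u ≠ v → β ≤ |u - v| :=
        fun u hu v hv huv => hsep u (hsub hu) v (hsub hv) huv
      have hmin' : x₀ + β ≤ s'.min' hs'ne := by
        apply Finset.le_min'
        intro v hv
        have hv' : v ∈ s := hsub hv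
        have hne : v ≠ x₀ := Finset.ne_of_mem_erase hv
        have h1 : β ≤ |v - x₀| := hsep v hv' x₀ (s.min'_mem hs) hne
        have h2 : x₀ ≤ v := s.min'_le v hv'
        rw [abs_of_nonneg (by linarith)] at h1
        linarith
      have hmax' : s'.max' hs'ne ≤ s.max' hs :=
        Finset.max'_subset hs'ne hsub
      have := ih s' hs'ne hcard' hsep'
      push_cast
      push_cast at this
      linarith


lemma circle_sep (x : ℝ) (n : ℕ) (β : ℝ) (hβ : 0 < β) (hn : 2 ≤ n)
    (hsep : ∀ d : ℤ, d ≠ 0 → |d| < (n:ℤ) → β ≤ nnorm ((d:ℝ) * x)) :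
    (n : ℝ) * β ≤ 1 := by
  set g : ℕ → ℝ := fun j => Int.fract ((j:ℝ) * x) with hg
  -- pairwise separation of values of g on range n
  have key : ∀ i < n, ∀ j < n, i ≠ j → β ≤ |g i - g j| := by
    intro i hi j hj hij
    have hd : ((i:ℤ) - j) ≠ 0 := by
      intro h; apply hij; omega
    have hdlt : |(i:ℤ) - j| < (n:ℤ) := by
      rw [abs_lt]; omega
    have h1 : g i - g j = ((i:ℝ) - j) * x - ((⌊(i:ℝ)*x⌋ : ℤ) - (⌊(j:ℝ)*x⌋ : ℤ)) := by
      simp only [hg, Int.fract]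
      push_cast
      ring
    have := nnorm_le (((i:ℝ) - j) * x) ((⌊(i:ℝ)*x⌋ : ℤ) - (⌊(j:ℝ)*x⌋ : ℤ))
    have h2 : β ≤ nnorm (((i:ℝ) - j) * x) := by
      have := hsep ((i:ℤ) - j) hd hdlt
      convert this using 3
      push_cast; ring
    rw [h1]
    calc β ≤ nnorm (((i:ℝ) - j) * x) := h2
    _ ≤ _ := by
      have h3 := nnorm_le (((i:ℝ) - j) * x) ((⌊(i:ℝ)*x⌋ : ℤ) - (⌊(j:ℝ)*x⌋ : ℤ))
      convert h3 using 2
      push_cast; ring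
  -- the finset
  set s : Finset ℝ := (Finset.range n).image g with hs
  have hginj : ∀ i ∈ Finset.range n, ∀ j ∈ Finset.range n, g i = g j → i = j := by
    intro i hi j hj hgij
    by_contra hne
    have := key i (Finset.mem_range.mp hi) j (Finset.mem_range.mp hj) hne
    rw [hgij] at this
    simp at this
    linarith
  have hcard : s.card = n := by
    rw [hs, Finset.card_image_of_injOn hginj, Finset.card_range]
  have hsne : s.Nonempty := by
    refine ⟨g 0, Finset.mem_image.mpr ⟨0, Finset.mem_range.mpr (by omega), rfl⟩⟩
  have hsep2 : ∀ u ∈ s, ∀ v ∈ s, u ≠ v → β ≤ |u - v| := by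
    intro u hu v hv huv
    obtain ⟨i, hi, rfl⟩ := Finset.mem_image.mp hu
    obtain ⟨j, hj, rfl⟩ := Finset.mem_image.mp hv
    exact key i (Finset.mem_range.mp hi) j (Finset.mem_range.mp hj) (fun h => huv (by rw [h]))
  have hspan := sep_lemma β hβ n s hsne hcard hsep2
  -- min and max come from indices
  obtain ⟨i, hi, hieq⟩ := Finset.mem_image.mp (s.min'_mem hsne)
  obtain ⟨j, hj, hjeq⟩ := Finset.mem_image.mp (s.max'_mem hsne)
  have hlt : s.min' hsne < s.max' hsne := by
    apply Finset.min'_lt_max'_of_card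
    omega
  have hij : i ≠ j := by
    intro h; rw [h, hjeq] at hieq; exact absurd hieq (ne_of_gt hlt)
  -- wrap-around gap
  have hwrap : β ≤ 1 + s.min' hsne - s.max' hsne := by
    have h1 : 1 + g i - g j = ((i:ℝ) - j) * x - ((⌊(i:ℝ)*x⌋ : ℤ) - (⌊(j:ℝ)*x⌋ : ℤ) - 1) := by
      simp only [hg, Int.fract]; push_cast; ring
    have hpos : 0 < 1 + g i - g j := by
      have := Int.fract_lt_one ((j:ℝ)*x)
      have := Int.fract_nonneg ((i:ℝ)*x)
      simp only [hg]
      linarith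
    have h2 : β ≤ nnorm (((i:ℝ) - j) * x) := by
      have hd : ((i:ℤ) - j) ≠ 0 := fun h => hij (by omega)
      have hdlt : |(i:ℤ) - j| < (n:ℤ) := by
        rw [abs_lt]
        have := Finset.mem_range.mp hi
        have := Finset.mem_range.mp hj
        omega
      have := hsep ((i:ℤ) - j) hd hdlt
      convert this using 3
      push_cast; ring
    have h3 := nnorm_le (((i:ℝ) - j) * x) ((⌊(i:ℝ)*x⌋ : ℤ) - (⌊(j:ℝ)*x⌋ : ℤ) - 1)
    rw [← hieq, ← hjeq, ← abs_of_pos hpos, h1]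
    calc β ≤ _ := h2
    _ ≤ _ := by convert h3 using 2; push_cast; ring
  push_cast at hspan
  linarith


lemma cover_s6 (θ t δ : ℝ) (M a b A B : ℤ) (β₀ γ₀ : ℝ)
    (ha1 : 1 ≤ a) (haM : a ≤ M - 1) (hb1 : 1 ≤ b) (hbM : b ≤ M - 1)
    (hA : (a : ℝ) * θ - A = β₀) (hB : (b : ℝ) * θ - B = -γ₀)
    (hβ : 0 < β₀) (hγ : 0 < γ₀) (hδ : 0 < δ)
    (hsum : β₀ + γ₀ ≤ 3/2 * δ) :
    ∃ k m : ℤ, 0 ≤ k ∧ k ≤ M - 1 ∧ |(k:ℝ) * θ - t - m| ≤ δ := by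
  have hM : (0:ℤ) ≤ M - 1 := by omega
  set K := Finset.Icc (0:ℤ) (M-1) with hK
  have hKne : K.Nonempty := ⟨0, Finset.mem_Icc.mpr ⟨le_refl _, hM⟩⟩
  obtain ⟨k₀, hk₀K, hk₀min⟩ := K.exists_min_image (fun k => Int.fract (t - k * θ)) hKne

  set h₀ := Int.fract (t - (k₀:ℝ) * θ) with hh₀
  have hk₀1 := (Finset.mem_Icc.mp hk₀K).1
  have hk₀2 := (Finset.mem_Icc.mp hk₀K).2
  rcases le_or_gt h₀ δ with hle | hgt
  · refine ⟨k₀, -⌊t - (k₀:ℝ) * θ⌋, hk₀1, hk₀2, ?_⟩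
    have he : (k₀:ℝ) * θ - t - ((-⌊t - (k₀:ℝ) * θ⌋ : ℤ) : ℝ) = -h₀ := by
      rw [hh₀]; unfold Int.fract; push_cast; ring
    rw [he, abs_neg, abs_of_nonneg (by rw [hh₀]; exact Int.fract_nonneg _)]
    exact hle
  · have step : ∃ (k₂ c : ℤ) (s : ℝ), k₂ ∈ K ∧ 0 < s ∧ s ≤ β₀ + γ₀ ∧
        (k₂:ℝ) * θ = (k₀:ℝ) * θ + s + c := by
      by_cases h1 : k₀ + a ≤ M - 1
      · refine ⟨k₀ + a, A, β₀, Finset.mem_Icc.mpr ⟨by omega, h1⟩, hβ, by linarith, ?_⟩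
        push_cast; linarith
      · by_cases h2 : b ≤ k₀
        · refine ⟨k₀ - b, -B, γ₀, Finset.mem_Icc.mpr ⟨by omega, by omega⟩, hγ, by linarith, ?_⟩
          push_cast; linarith
        · refine ⟨k₀ + a - b, A - B, β₀ + γ₀, Finset.mem_Icc.mpr ⟨by omega, by omega⟩,
            by linarith, le_refl _, ?_⟩
          push_cast; linarith
    obtain ⟨k₂, c, s, hk₂K, hs0, hsle, heq⟩ := step
    have hfr : Int.fract (t - (k₂:ℝ) * θ) = Int.fract (h₀ - s) := by
      have he : t - (k₂:ℝ)*θ = (h₀ - s) + (⌊t - (k₀:ℝ)*θ⌋ - c) := by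
        rw [heq, hh₀]; unfold Int.fract; push_cast; ring
      rw [he, show ((⌊t - (k₀:ℝ)*θ⌋ :ℤ):ℝ) - (c:ℝ) = ((⌊t - (k₀:ℝ)*θ⌋ - c : ℤ):ℝ) by push_cast; ring,
        Int.fract_add_intCast]
    rcases le_or_gt s h₀ with hsh | hsh
    · exfalso
      have hlt1 : Int.fract (h₀ - s) = h₀ - s := by
        rw [Int.fract_eq_self]
        constructor
        · linarith
        · have : h₀ < 1 := Int.fract_lt_one _
          linarith
      have := hk₀min k₂ hk₂K
      rw [hfr, hlt1] at this
      linarith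
    · refine ⟨k₂, c - ⌊t - (k₀:ℝ)*θ⌋, (Finset.mem_Icc.mp hk₂K).1, (Finset.mem_Icc.mp hk₂K).2, ?_⟩
      have he : (k₂:ℝ)*θ - t - ((c - ⌊t - (k₀:ℝ)*θ⌋ : ℤ):ℝ) = s - h₀ := by
        rw [heq, hh₀]; unfold Int.fract; push_cast; ring
      rw [he, abs_of_pos (by linarith)]
      linarith

lemma nnorm_natAbs (x : ℝ) (d : ℤ) : nnorm ((d.natAbs : ℝ) * x) = nnorm ((d:ℝ) * x) := by
  rw [Nat.cast_natAbs, Int.cast_abs]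
  rcases le_or_gt 0 (d:ℝ) with h | h
  · rw [abs_of_nonneg h]
  · rw [abs_of_neg h, show (-(d:ℝ)) * x = -((d:ℝ)*x) by ring, nnorm_neg]

set_option maxHeartbeats 4000000 in
/-- **Ergodization time for circle rotations.** For irrational `α` with `|α| ≤ 1` and
`0 < δ < 1`, the `δ`-ergodization time of the rotation `R_α` satisfies
`N_α(δ) ≤ ⌊Ψ_α(2/δ)⌋ − 1`: for all `x, y ∈ ℝ` there are integers `k`, `m` with
`0 ≤ k ≤ ⌊Ψ_α(2/δ)⌋ − 1` and `|x + k·α − y − m| ≤ δ`. -/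
theorem circle_rotation_ergodization_time (α : ℝ) (hα : Irrational α) (hα1 : |α| ≤ 1)
    (Ψ : ℝ → ℝ)
    (hΨ : ∀ Q : ℝ, Ψ Q = sSup {r : ℝ | ∃ k₁ k₂ : ℤ, ¬(k₁ = 0 ∧ k₂ = 0) ∧
      ((max |k₁| |k₂| : ℤ) : ℝ) ≤ Q ∧ r = |(k₁ : ℝ) + (k₂ : ℝ) * α|⁻¹})
    (δ : ℝ) (hδ : 0 < δ) (hδ1 : δ < 1)
    (x y : ℝ) :
    ∃ k : ℤ, 0 ≤ k ∧ k ≤ ⌊Ψ (2 / δ)⌋ - 1 ∧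
      ∃ m : ℤ, |x + (k : ℝ) * α - y - (m : ℝ)| ≤ δ := by
  -- irrationality of integer combinations
  have hcomb : ∀ d : ℤ, d ≠ 0 → ∀ m : ℤ, (d:ℝ) * α - m ≠ 0 := by
    intro d hd m h
    exact ((hα.intCast_mul hd).sub_intCast m) (by rw [h]; exact ⟨0, by norm_num⟩)
  have hnpos : ∀ j : ℕ, j ≠ 0 → 0 < nnorm ((j:ℝ) * α) := by
    intro j hj
    have h0 := hcomb (j:ℤ) (by exact_mod_cast hj) (round ((j:ℝ)*α))
    unfold nnorm
    rw [abs_pos]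
    intro h
    exact h0 (by push_cast at h ⊢; linarith)
  have hδ2 : (2:ℝ) < 2/δ := by
    rw [lt_div_iff₀ hδ]; nlinarith
  have hQpos : (0:ℝ) < 2/δ := by positivity
  set n₀ : ℕ := ⌊(2/δ)⌋₊ with hn₀def
  have hn₀2 : 2 ≤ n₀ := Nat.le_floor (le_of_lt hδ2)
  have hn₀le : (n₀ : ℝ) ≤ 2/δ := Nat.floor_le (le_of_lt hQpos)
  have hn₀gt : 2/δ < n₀ + 1 := Nat.lt_floor_add_one _
  have hIcc : (Finset.Icc 1 n₀).Nonempty := ⟨1, Finset.mem_Icc.mpr ⟨le_refl _, by omega⟩⟩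
  obtain ⟨q, hqmem, hq⟩ := Finset.exists_mem_eq_inf' hIcc (fun j : ℕ => nnorm ((j:ℝ) * α))
  set β := (Finset.Icc 1 n₀).inf' hIcc (fun j : ℕ => nnorm ((j:ℝ) * α)) with hβdef
  have hq1 : 1 ≤ q := (Finset.mem_Icc.mp hqmem).1
  have hqn₀ : q ≤ n₀ := (Finset.mem_Icc.mp hqmem).2
  have hβle : ∀ j : ℕ, 1 ≤ j → j ≤ n₀ → β ≤ nnorm ((j:ℝ) * α) := fun j h1 h2 =>
    Finset.inf'_le _ (Finset.mem_Icc.mpr ⟨h1, h2⟩)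
  have hβpos : 0 < β := by rw [hq]; exact hnpos q (by omega)
  -- Dirichlet at n₀
  have hβsmall : β ≤ 1/((n₀:ℝ)+1) := by
    obtain ⟨j₀, k₀, hk₀pos, hk₀le, hdir⟩ := Real.exists_int_int_abs_mul_sub_le α (n := n₀) (by omega)
    have h1 : β ≤ nnorm ((k₀.toNat : ℝ) * α) := by
      apply hβle <;> omega
    have hteq : ((k₀.toNat : ℕ) : ℝ) = ((k₀:ℤ):ℝ) := by
      have h := Int.toNat_of_nonneg hk₀pos.le
      exact_mod_cast congrArg (fun z : ℤ => (z:ℝ)) h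
    have h2 : nnorm ((k₀.toNat:ℝ) * α) ≤ |(k₀:ℝ) * α - j₀| := by
      rw [hteq]
      exact nnorm_le _ _
    calc β ≤ _ := h1
    _ ≤ _ := h2
    _ ≤ _ := hdir
  have hβhalf : β < δ/2 := by
    have h1 : 1/((n₀:ℝ)+1) < 1/(2/δ) := by
      apply one_div_lt_one_div_of_lt hQpos hn₀gt
    have h2 : 1/(2/δ) = δ/2 := by field_simp
    linarith
  -- the value of Ψ
  have hPsiEq : Ψ (2/δ) = β⁻¹ := by
    rw [hΨ]
    apply IsGreatest.csSup_eq
    constructor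
    · refine ⟨-(round ((q:ℝ)*α)), (q:ℤ), ?_, ?_, ?_⟩
      · rintro ⟨-, h⟩
        have : q = 0 := by exact_mod_cast h
        omega
      · have hq0 : (0:ℝ) ≤ (q:ℝ) := by positivity
        have habs : |round ((q:ℝ)*α)| ≤ (q:ℤ) := by
          have h1 : |(q:ℝ)*α - round ((q:ℝ)*α)| ≤ 1/2 := abs_sub_round _
          have h2 : |(q:ℝ)*α| ≤ (q:ℝ) := by
            rw [abs_mul, abs_of_nonneg hq0]
            nlinarith [abs_nonneg α]
          have h3 : |(round ((q:ℝ)*α) : ℝ)| ≤ (q:ℝ) + 1/2 := by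
            calc |(round ((q:ℝ)*α) : ℝ)| = |(q:ℝ)*α + ((round ((q:ℝ)*α):ℝ) - (q:ℝ)*α)| := by
                  ring_nf
            _ ≤ |(q:ℝ)*α| + |(round ((q:ℝ)*α):ℝ) - (q:ℝ)*α| := abs_add_le _ _
            _ = |(q:ℝ)*α| + |(q:ℝ)*α - round ((q:ℝ)*α)| := by rw [abs_sub_comm]
            _ ≤ _ := by linarith
          have h4 : ((|round ((q:ℝ)*α)| : ℤ) : ℝ) < (q:ℝ) + 1 := by
            push_cast
            linarith
          have h5 : |round ((q:ℝ)*α)| < (q:ℤ) + 1 := by exact_mod_cast h4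
          omega
        have hmx : max |(-(round ((q:ℝ)*α)))| |(q:ℤ)| ≤ (q:ℤ) := by
          rw [abs_neg]
          simp only [max_le_iff]
          exact ⟨habs, by simp⟩
        calc ((max |(-(round ((q:ℝ)*α)))| |(q:ℤ)| : ℤ) : ℝ) ≤ ((q:ℤ):ℝ) := by exact_mod_cast hmx
        _ ≤ (n₀:ℝ) := by exact_mod_cast hqn₀
        _ ≤ 2/δ := hn₀le
      · show β⁻¹ = _
        congr 1
        rw [hq]
        unfold nnorm
        congr 1
        push_cast
        ring
    · rintro r ⟨k₁, k₂, hk, hmax, rfl⟩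
      have hβabs : β ≤ |(k₁:ℝ) + (k₂:ℝ) * α| := by
        rcases eq_or_ne k₂ 0 with rfl | hk₂
        · have hk₁ : k₁ ≠ 0 := by tauto
          have h1 : (1:ℝ) ≤ |(k₁:ℝ)| := by
            have h2 := Int.one_le_abs hk₁
            calc (1:ℝ) = ((1:ℤ):ℝ) := by norm_num
            _ ≤ ((|k₁|:ℤ):ℝ) := by exact_mod_cast h2
            _ = |(k₁:ℝ)| := by push_cast; rfl
          have hβ1 : β < 1 := by
            have h33 : (2:ℝ) ≤ (n₀:ℝ) := by exact_mod_cast hn₀2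
            have h34 : (1:ℝ)/((n₀:ℝ)+1) ≤ 1/3 := by
              apply one_div_le_one_div_of_le (by norm_num)
              linarith
            linarith
          simp only [Int.cast_zero, zero_mul, add_zero]
          linarith
        · have hd1 : 1 ≤ k₂.natAbs := by omega
          have hd2 : k₂.natAbs ≤ n₀ := by
            have h1 : ((|k₂|:ℤ):ℝ) ≤ 2/δ :=
              le_trans (by exact_mod_cast le_max_right |k₁| |k₂|) hmax
            have h2 : (k₂.natAbs : ℝ) ≤ 2/δ := by
              rwa [show ((|k₂|:ℤ):ℝ) = (k₂.natAbs:ℝ) by rw [Nat.cast_natAbs, Int.cast_abs]] at h1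
            exact Nat.le_floor h2
          calc β ≤ nnorm ((k₂.natAbs:ℝ) * α) := hβle _ hd1 hd2
          _ = nnorm ((k₂:ℝ) * α) := nnorm_natAbs α k₂
          _ ≤ |(k₂:ℝ)*α - ((-k₁ : ℤ):ℝ)| := nnorm_le _ _
          _ = |(k₁:ℝ) + (k₂:ℝ) * α| := by rw [show (k₂:ℝ)*α - ((-k₁ : ℤ):ℝ) = (k₁:ℝ) + (k₂:ℝ)*α by push_cast; ring]
      exact inv_anti₀ hβpos hβabs
  -- least q' with nnorm (q' α) < β
  have hEx : ∃ j : ℕ, 0 < j ∧ nnorm ((j:ℝ) * α) < β := by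
    set n₁ : ℕ := n₀ + ⌈1/β⌉₊ with hn₁
    have hn₁pos : 0 < n₁ := by omega
    obtain ⟨j₁, k₁, hk₁pos, hk₁le, hdir⟩ := Real.exists_int_int_abs_mul_sub_le α (n := n₁) hn₁pos
    refine ⟨k₁.toNat, by omega, ?_⟩
    have hteq : ((k₁.toNat : ℕ) : ℝ) = ((k₁:ℤ):ℝ) := by
      exact_mod_cast congrArg (fun z : ℤ => (z:ℝ)) (Int.toNat_of_nonneg hk₁pos.le)
    have h2 : nnorm ((k₁.toNat:ℝ) * α) ≤ |(k₁:ℝ) * α - j₁| := by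
      rw [hteq]; exact nnorm_le _ _
    have h3 : 1/((n₁:ℝ)+1) < β := by
      have hceil : 1/β ≤ (⌈1/β⌉₊ : ℝ) := Nat.le_ceil _
      have h4 : (⌈1/β⌉₊:ℝ) ≤ (n₁:ℝ) := by
        have h5 : ⌈1/β⌉₊ ≤ n₁ := by omega
        exact_mod_cast h5
      have h5 : 1/β < (n₁:ℝ)+1 := by linarith
      rw [div_lt_iff₀ (by positivity : (0:ℝ) < (n₁:ℝ)+1)]
      calc (1:ℝ) = β * (1/β) := by field_simp
      _ < β * ((n₁:ℝ)+1) := by exact mul_lt_mul_of_pos_left h5 hβpos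
    calc nnorm _ ≤ _ := h2
    _ ≤ _ := hdir
    _ < β := h3
  set q' : ℕ := Nat.find hEx with hq'def
  obtain ⟨hq'pos, hq'lt⟩ := Nat.find_spec hEx
  have hq'min : ∀ j : ℕ, 0 < j → j < q' → β ≤ nnorm ((j:ℝ)*α) := by
    intro j hj hjq
    by_contra hcon
    exact (Nat.find_min hEx hjq) ⟨hj, lt_of_not_ge hcon⟩
  have hq'gt : n₀ < q' := by
    by_contra hcon
    push_neg at hcon
    exact absurd (hβle q' (by omega) hcon) (not_le.mpr hq'lt)
  have hqq' : q < q' := by omega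
  -- q' * β < 1
  have hsepZ : ∀ d : ℤ, d ≠ 0 → |d| < (q':ℤ) → β ≤ nnorm ((d:ℝ) * α) := by
    intro d hd hdlt
    have h1 : 0 < d.natAbs := Int.natAbs_pos.mpr hd
    have h2 : d.natAbs < q' := by
      rw [Int.abs_eq_natAbs] at hdlt
      exact_mod_cast hdlt
    have h3 := hq'min d.natAbs h1 h2
    rwa [nnorm_natAbs α d] at h3
  have hq'β : (q':ℝ) * β ≤ 1 := circle_sep α q' β hβpos (by omega) hsepZ
  have hβirr : Irrational β := by
    rw [hq]
    have h1 : Irrational ((q:ℝ) * α) := hα.natCast_mul (show q ≠ 0 by omega)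
    have h2 : Irrational ((q:ℝ)*α - round ((q:ℝ)*α)) := h1.sub_intCast _
    unfold nnorm
    rcases abs_cases ((q:ℝ)*α - (round ((q:ℝ)*α) : ℤ)) with ⟨he,_⟩ | ⟨he,_⟩
    · rw [he]; exact h2
    · rw [he]; exact h2.neg
  have hq'βlt : (q':ℝ) * β < 1 := by
    rcases lt_or_eq_of_le hq'β with h | h
    · exact h
    · exfalso
      apply hβirr
      have hβeq : β = ((q':ℝ))⁻¹ :=
        eq_inv_of_mul_eq_one_left (by linarith [h])
      refine ⟨(q':ℚ)⁻¹, ?_⟩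
      push_cast
      rw [hβeq]
  -- M
  set M : ℤ := ⌊β⁻¹⌋ with hMdef
  have hMfloor : ⌊Ψ (2/δ)⌋ = M := by rw [hPsiEq]
  have hn₀M : (n₀:ℤ) + 1 ≤ M := by
    apply Int.le_floor.mpr
    push_cast
    rw [← one_div, le_div_iff₀ hβpos]
    calc ((n₀:ℝ)+1) * β ≤ ((n₀:ℝ)+1) * (1/((n₀:ℝ)+1)) :=
      mul_le_mul_of_nonneg_left hβsmall (by positivity)
    _ = 1 := by field_simp
  have hq'M : (q':ℤ) ≤ M := by
    apply Int.le_floor.mpr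
    push_cast
    rw [← one_div, le_div_iff₀ hβpos]
    exact le_of_lt hq'βlt
  -- quantities
  set A : ℤ := round ((q:ℝ)*α) with hAdef
  set P : ℤ := round ((q':ℝ)*α) with hPdef
  set β₀ : ℝ := (q:ℝ)*α - A with hβ₀def
  set ε₀ : ℝ := (q':ℝ)*α - P with hε₀def
  have hβ₀abs : |β₀| = β := by rw [hq]; rfl
  have hε₀abs : |ε₀| < β := hq'lt
  have hβ₀ne : β₀ ≠ 0 := by
    intro h; rw [h, abs_zero] at hβ₀abs; exact hβpos.ne' hβ₀abs.symm
  have hε₀ne : ε₀ ≠ 0 := by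
    have h1 := hcomb (q':ℤ) (by exact_mod_cast hq'pos.ne') P
    intro h
    apply h1
    rw [← h, hε₀def]
    push_cast
    ring
  have hsign : β₀ * ε₀ < 0 := by
    rcases lt_trichotomy (β₀*ε₀) 0 with h | h | h
    · exact h
    · exfalso
      rcases mul_eq_zero.mp h with h' | h'
      · exact hβ₀ne h'
      · exact hε₀ne h'
    · exfalso
      have hd0 : 0 < q' - q := by omega
      have hdlt : q' - q < q' := by omega
      have hmin := hq'min (q'-q) hd0 hdlt
      have hcast : ((q'-q : ℕ):ℝ) = (q':ℝ) - q := by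
        push_cast [Nat.cast_sub (le_of_lt hqq')]
        ring
      have hval : ((q'-q:ℕ):ℝ) * α - ((P - A : ℤ):ℝ) = ε₀ - β₀ := by
        rw [hcast, hε₀def, hβ₀def]; push_cast; ring
      have hle2 : nnorm (((q'-q:ℕ):ℝ) * α) ≤ |ε₀ - β₀| := by
        have h6 := nnorm_le (((q'-q:ℕ):ℝ)*α) (P - A)
        rwa [hval] at h6
      have habs2 : |ε₀ - β₀| < β := by
        rw [abs_lt]
        rcases abs_cases β₀ with ⟨hb, hb0⟩ | ⟨hb, hb0⟩ <;>
          rcases abs_cases ε₀ with ⟨he, he0⟩ | ⟨he, he0⟩ <;>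
          rw [hb] at hβ₀abs <;> rw [he] at hε₀abs <;>
          constructor <;> nlinarith [h]
      linarith
  -- apply cover
  have hq1Z : (1:ℤ) ≤ (q:ℤ) := by exact_mod_cast hq1
  have hqMZ : (q:ℤ) ≤ M - 1 := by
    have : (q:ℤ) ≤ (n₀:ℤ) := by exact_mod_cast hqn₀
    omega
  have hb1Z : (1:ℤ) ≤ (q':ℤ) - q := by
    have : (q:ℤ) < (q':ℤ) := by exact_mod_cast hqq'
    omega
  have hbMZ : (q':ℤ) - q ≤ M - 1 := by omega
  have hsum3 : |β₀| + (|β₀| + |ε₀|) ≤ 3/2 * δ := by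
    rw [hβ₀abs]
    linarith
  rcases lt_trichotomy β₀ 0 with hbneg | hbzero | hbpos
  · -- β₀ < 0, ε₀ > 0
    have hepos : 0 < ε₀ := by
      rcases lt_trichotomy ε₀ 0 with h | h | h
      · nlinarith
      · exact absurd h hε₀ne
      · exact h
    have hA' : ((q:ℤ):ℝ) * (-α) - ((-A : ℤ):ℝ) = -β₀ := by
      rw [hβ₀def]; push_cast; ring
    have hB' : (((q':ℤ) - q : ℤ):ℝ) * (-α) - ((-(P-A) : ℤ):ℝ) = -(-(β₀ - ε₀)) := by
      rw [hβ₀def, hε₀def]; push_cast; ring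
    obtain ⟨k, m, hk0, hkM, hkabs⟩ := cover_s6 (-α) (x - y) δ M (q:ℤ) ((q':ℤ) - q) (-A) (-(P-A))
      (-β₀) (-(β₀ - ε₀)) hq1Z hqMZ hb1Z hbMZ hA' hB'
      (by linarith) (by linarith) hδ
      (by
        have h7 : -β₀ = |β₀| := (abs_of_neg hbneg).symm
        have h8 : ε₀ = |ε₀| := (abs_of_pos hepos).symm
        linarith)
    refine ⟨k, hk0, by rw [hMfloor]; omega, -m, ?_⟩
    have heq2 : x + (k:ℝ) * α - y - ((-m : ℤ):ℝ) = -((k:ℝ) * (-α) - (x - y) - m) := by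
      push_cast; ring
    rw [heq2, abs_neg]
    exact hkabs
  · exact absurd hbzero hβ₀ne
  · -- β₀ > 0, ε₀ < 0
    have heneg : ε₀ < 0 := by
      rcases lt_trichotomy ε₀ 0 with h | h | h
      · exact h
      · exact absurd h hε₀ne
      · nlinarith
    have hA' : ((q:ℤ):ℝ) * α - ((A : ℤ):ℝ) = β₀ := by
      rw [hβ₀def]; push_cast; ring
    have hB' : (((q':ℤ) - q : ℤ):ℝ) * α - ((P - A : ℤ):ℝ) = -(β₀ - ε₀) := by
      rw [hβ₀def, hε₀def]; push_cast; ring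
    obtain ⟨k, m, hk0, hkM, hkabs⟩ := cover_s6 α (y - x) δ M (q:ℤ) ((q':ℤ) - q) A (P-A)
      β₀ (β₀ - ε₀) hq1Z hqMZ hb1Z hbMZ hA' hB'
      hbpos (by linarith) hδ
      (by
        have h7 : β₀ = |β₀| := (abs_of_pos hbpos).symm
        have h8 : -ε₀ = |ε₀| := (abs_of_neg heneg).symm
        linarith)
    refine ⟨k, hk0, by rw [hMfloor]; omega, m, ?_⟩
    have heq2 : x + (k:ℝ) * α - y - ((m : ℤ):ℝ) = (k:ℝ) * α - (y - x) - m := by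
      ring
    rw [heq2]
    exact hkabs
end

section
/- Let α ∈ ℝ, let p ∈ ℤ and q ∈ ℕ with q ≥ 1 and gcd(p,q) = 1, and let 0 < δ < 1 satisfy q ≥ 2/δ and |q·α − p| ≤ δ/2. Then for every x, y ∈ ℝ there exist an integer k with 0 ≤ k ≤ q − 1 and an integer m ∈ ℤ such that |x + k·α − y − m| ≤ δ. (That is, every orbit of length q of the rotation R_α is δ-dense in the circle.) -/
/-- **Approximation by a rational rotation gives `δ`-density.** If `gcd(p,q) = 1`, `q ≥ 2/δ`
and `|qα − p| ≤ δ/2` with `0 < δ < 1`, then for all `x, y ∈ ℝ` there are an integer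
`0 ≤ k ≤ q − 1` and `m ∈ ℤ` with `|x + k·α − y − m| ≤ δ`; that is, every orbit of length
`q` of the rotation `R_α` is `δ`-dense in the circle. -/
theorem rotation_orbit_dense (α : ℝ) (p : ℤ) (q : ℕ) (hq : 1 ≤ q)
    (hpq : Int.gcd p (q : ℤ) = 1)
    (δ : ℝ) (hδ : 0 < δ) (hδ1 : δ < 1)
    (hqδ : 2 / δ ≤ (q : ℝ))
    (happ : |(q : ℝ) * α - (p : ℝ)| ≤ δ / 2)
    (x y : ℝ) :
    ∃ k : ℕ, k ≤ q - 1 ∧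
      ∃ m : ℤ, |x + (k : ℝ) * α - y - (m : ℝ)| ≤ δ := by
  have hq' : (0:ℤ) < (q:ℤ) := by exact_mod_cast hq
  have hqR : (0:ℝ) < (q:ℝ) := by exact_mod_cast hq
  set a := Int.gcdA p (q:ℤ) with ha
  set b := Int.gcdB p (q:ℤ) with hb
  have hbez : p * a + (q:ℤ) * b = 1 := by
    have h := Int.gcd_eq_gcd_ab p (q:ℤ)
    rw [hpq] at h
    exact_mod_cast h.symm
  set n : ℤ := round ((q:ℝ) * (y - x)) with hn
  set k' : ℤ := (n * a) % (q:ℤ) with hk'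
  have hk'0 : 0 ≤ k' := Int.emod_nonneg _ (by omega)
  have hk'lt : k' < (q:ℤ) := Int.emod_lt_of_pos _ hq'
  set s : ℤ := -(n * b) - (n * a / (q:ℤ)) * p with hsdef
  have hs : k' * p - n = (q:ℤ) * s := by
    have hk'def : k' = n * a - (q:ℤ) * (n * a / (q:ℤ)) := by
      rw [hk', Int.emod_def]
    rw [hk'def, hsdef]
    linear_combination n * hbez
  refine ⟨k'.toNat, by omega, s, ?_⟩
  have hKcast : ((k'.toNat : ℕ) : ℝ) = (k' : ℝ) := by
    exact_mod_cast congrArg (Int.cast : ℤ → ℝ) (Int.toNat_of_nonneg hk'0)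
  rw [hKcast]
  have hKp : (k' : ℝ) * (p : ℝ) = (n : ℝ) + (q : ℝ) * (s : ℝ) := by
    exact_mod_cast (by linarith : k' * p = n + (q:ℤ) * s)
  have key : x + (k' : ℝ) * α - y - (s : ℝ) =
      ((k' : ℝ) / (q : ℝ)) * ((q : ℝ) * α - (p : ℝ)) +
        ((n : ℝ) - (q : ℝ) * (y - x)) / (q : ℝ) := by
    field_simp
    linear_combination hKp
  rw [key]
  have h1 : |((k' : ℝ) / (q : ℝ)) * ((q : ℝ) * α - (p : ℝ))| ≤ δ / 2 := by
    rw [abs_mul]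
    have hk1 : |(k' : ℝ) / (q : ℝ)| ≤ 1 := by
      rw [abs_div, abs_of_nonneg (by exact_mod_cast hk'0 : (0:ℝ) ≤ (k':ℝ)),
        abs_of_pos hqR, div_le_one hqR]
      exact_mod_cast hk'lt.le
    calc |(k' : ℝ) / (q : ℝ)| * |(q : ℝ) * α - (p : ℝ)| ≤ 1 * (δ / 2) := by
          exact mul_le_mul hk1 happ (abs_nonneg _) zero_le_one
      _ = δ / 2 := one_mul _
  have h2 : |((n : ℝ) - (q : ℝ) * (y - x)) / (q : ℝ)| ≤ δ / 4 := by
    have hr : |((q:ℝ) * (y - x)) - (n : ℝ)| ≤ 1 / 2 := abs_sub_round _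
    rw [abs_div, abs_of_pos hqR, div_le_iff₀ hqR]
    have hq2 : 2 ≤ δ * (q:ℝ) := by
      have := (div_le_iff₀ hδ).mp hqδ
      linarith
    rw [abs_sub_comm]
    nlinarith
  calc |((k' : ℝ) / (q : ℝ)) * ((q : ℝ) * α - (p : ℝ)) +
        ((n : ℝ) - (q : ℝ) * (y - x)) / (q : ℝ)|
      ≤ |((k' : ℝ) / (q : ℝ)) * ((q : ℝ) * α - (p : ℝ))| +
        |((n : ℝ) - (q : ℝ) * (y - x)) / (q : ℝ)| := abs_add_le _ _
    _ ≤ δ / 2 + δ / 4 := add_le_add h1 h2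
    _ ≤ δ := by linarith
end
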